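/- arXiv:1710.00965 — 3 statements merged into one kernel-verified Lean document; each statement's English description precedes it below -/
import Mathlib

section
/- Let k ≥ 2 and let (X̃_1,Ỹ_1),…,(X̃_k,Ỹ_k) be i.i.d. pairs such that X̃_i is independent of Ỹ_i and both have continuous distributions. Let τ_k = (1/(k(k−1))) Σ_{i≠j} sign(X̃_i−X̃_j) sign(Ỹ_i−Ỹ_j) be the sample Kendall tau. Then for every r > 0, P(τ_k·√(9k(k−1)/(2(2k+5))) > r) ≤ exp(−r²/9). -/
open MeasureTheory ProbabilityTheory Filter

noncomputable section

/-- Sum of `sign(X_i−X_j)·sign(Y_i−Y_j)` over ordered pairs of distinct indices in `s`. -/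
def concordSum {n : ℕ} (s : Finset (Fin n)) (X Y : Fin n → ℝ) : ℝ :=
  ∑ i ∈ s, ∑ j ∈ s, if i ≠ j then Real.sign (X i - X j) * Real.sign (Y i - Y j) else 0

/-- Sample Kendall tau of `{(X_i, Y_i)}_{i=1}^n`. -/
def kendallTau (n : ℕ) (X Y : Fin n → ℝ) : ℝ :=
  concordSum Finset.univ X Y / (n * ((n : ℝ) - 1))

/-- `K(t_X, t_Y)`: indices whose coordinates are above both thresholds. -/
def trSet (n : ℕ) (X Y : Fin n → ℝ) (tX tY : ℝ) : Finset (Fin n) :=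
  Finset.univ.filter fun i => tX ≤ X i ∧ tY ≤ Y i

/-- `n_{t_X, t_Y}`. -/
def trCount (n : ℕ) (X Y : Fin n → ℝ) (tX tY : ℝ) : ℕ := (trSet n X Y tX tY).card

/-- `τ(t_X, t_Y)`: sample Kendall tau over the indices above both thresholds. -/
def trTau (n : ℕ) (X Y : Fin n → ℝ) (tX tY : ℝ) : ℝ :=
  concordSum (trSet n X Y tX tY) X Y /
    (trCount n X Y tX tY * ((trCount n X Y tX tY : ℝ) - 1))

/-- The normalizing factor `W(x) = √(9x(x−1)/(2(2x+5)))`. -/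
def Wfun (x : ℝ) : ℝ := Real.sqrt (9 * x * (x - 1) / (2 * (2 * x + 5)))

/-- `τ̃(t_X, t_Y) = τ(t_X, t_Y) · W(n_{t_X, t_Y})`. -/
def trTauTilde (n : ℕ) (X Y : Fin n → ℝ) (tX tY : ℝ) : ℝ :=
  trTau n X Y tX tY * Wfun (trCount n X Y tX tY)

/-- `τ̃` as extended real, with the convention that it is `−∞` when `n_{t_X,t_Y} ≤ 1`. -/
def trTauTildeE (n : ℕ) (X Y : Fin n → ℝ) (tX tY : ℝ) : EReal :=
  if 2 ≤ trCount n X Y tX tY then ((trTauTilde n X Y tX tY : ℝ) : EReal) else ⊥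

/-- `j`-th order statistic (1-indexed, `j`-th smallest value). -/
def orderStat {n : ℕ} (X : Fin n → ℝ) (j : ℕ) : ℝ :=
  ((List.ofFn X).mergeSort (· ≤ ·)).getD (j - 1) 0

/-- The scan statistic `τ* = max_{j,k ≥ ⌊n/2⌋} τ̃(X_{(j)}, Y_{(k)})`. -/
def tauStar (n : ℕ) (X Y : Fin n → ℝ) : EReal :=
  (Finset.Icc (n / 2) n).sup fun j =>
    (Finset.Icc (n / 2) n).sup fun k =>
      trTauTildeE n X Y (orderStat X j) (orderStat Y k)

/-- Event that both independent copies exceed the thresholds. -/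
def pairAbove (ηX ηY : ℝ) : Set ((ℝ × ℝ) × ℝ × ℝ) :=
  {p | ηX < p.1.1 ∧ ηY < p.1.2 ∧ ηX < p.2.1 ∧ ηY < p.2.2}

/-- `T(η_X, η_Y)`: concordance minus discordance probability of two independent copies,
conditionally on both exceeding the thresholds. -/
def Tpop (ν : Measure (ℝ × ℝ)) (ηX ηY : ℝ) : ℝ :=
  (((ν.prod ν)[|pairAbove ηX ηY]) {p | 0 < (p.1.1 - p.2.1) * (p.1.2 - p.2.2)}).toReal -
  (((ν.prod ν)[|pairAbove ηX ηY]) {p | (p.1.1 - p.2.1) * (p.1.2 - p.2.2) < 0}).toReal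

/-- `V(η_X, η_Y) = 1 + F(η_X, η_Y) − F_X(η_X) − F_Y(η_Y)`. -/
def Vpop (ν : Measure (ℝ × ℝ)) (ηX ηY : ℝ) : ℝ :=
  1 + (ν {p | p.1 ≤ ηX ∧ p.2 ≤ ηY}).toReal - (ν {p | p.1 ≤ ηX}).toReal
    - (ν {p | p.2 ≤ ηY}).toReal

/-- Both marginal distributions of `ν` are atomless (continuous marginal CDFs). -/
def ContinuousMarginals (ν : Measure (ℝ × ℝ)) : Prop :=
  ∀ x : ℝ, ν {p | p.1 = x} = 0 ∧ ν {p | p.2 = x} = 0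

/-- The uniform distribution on `[0,1]`. -/
def unif01 : Measure ℝ := volume.restrict (Set.Icc 0 1)

/-- The law of `n` i.i.d. pairs of independent `Uniform(0,1)` random variables. -/
def nullLaw (n : ℕ) : Measure (Fin n → ℝ × ℝ) := Measure.pi fun _ => unif01.prod unif01

/-- `τ*` as a function on the canonical sample space. -/
def tauStarCanon (n : ℕ) (v : Fin n → ℝ × ℝ) : EReal :=
  tauStar n (fun i => (v i).1) (fun i => (v i).2)

/-- The `(1−α)`-quantile of the null distribution of `τ*` from `n` i.i.d. pairs of
independent `Uniform(0,1)` random variables. -/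
def qQuantile (α : ℝ) (n : ℕ) : EReal :=
  sInf {q : EReal | nullLaw n {v | q < tauStarCanon n v} ≤ ENNReal.ofReal α}

namespace KendallAux

set_option maxHeartbeats 1000000


lemma measurable_realSign : Measurable Real.sign := by
  have h : Real.sign = fun r : ℝ => if r < 0 then (-1:ℝ) else if 0 < r then 1 else 0 := by
    funext r; rfl
  rw [h]
  exact Measurable.ite measurableSet_Iio measurable_const
    (Measurable.ite measurableSet_Ioi measurable_const measurable_const)

lemma abs_realSign_le (x : ℝ) : |Real.sign x| ≤ 1 := by
  rcases Real.sign_apply_eq x with h | h | h <;> simp [h]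

lemma abs_sign_mul_sign_le (x y : ℝ) : |Real.sign x * Real.sign y| ≤ 1 := by
  rw [abs_mul]
  exact mul_le_one₀ (abs_realSign_le x) (abs_nonneg _) (abs_realSign_le y)

lemma exp_mul_le {x : ℝ} (hx : |x| ≤ 1) (u : ℝ) :
    Real.exp (u * x) ≤ Real.cosh u + x * Real.sinh u := by
  obtain ⟨hx1, hx2⟩ := abs_le.1 hx
  have h := convexOn_exp.2 (Set.mem_univ (-u)) (Set.mem_univ u)
      (show (0:ℝ) ≤ (1 - x)/2 by linarith) (show (0:ℝ) ≤ (1 + x)/2 by linarith)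
      (show (1 - x)/2 + (1 + x)/2 = 1 by ring)
  simp only [smul_eq_mul] at h
  have e1 : (1 - x)/2 * (-u) + (1 + x)/2 * u = u * x := by ring
  rw [e1] at h
  calc Real.exp (u*x) ≤ (1-x)/2 * Real.exp (-u) + (1+x)/2 * Real.exp u := h
  _ = Real.cosh u + x * Real.sinh u := by rw [Real.cosh_eq, Real.sinh_eq]; ring

lemma integrable_of_bounded {α : Type*} [MeasurableSpace α] {μ : Measure α} [IsFiniteMeasure μ]
    {f : α → ℝ} (hm : AEStronglyMeasurable f μ) (C : ℝ) (h : ∀ x, |f x| ≤ C) :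
    Integrable f μ :=
  Integrable.mono' (integrable_const C) hm (ae_of_all _ h)

lemma integral_sign_prod (ν : Measure ℝ) [IsProbabilityMeasure ν] :
    ∫ z : ℝ × ℝ, Real.sign (z.1 - z.2) ∂(ν.prod ν) = 0 := by
  have h := integral_prod_swap (ν := ν) (μ := ν) (fun z : ℝ × ℝ => Real.sign (z.1 - z.2))
  simp only [Prod.fst_swap, Prod.snd_swap] at h
  have h2 : ∀ z : ℝ × ℝ, Real.sign (z.2 - z.1) = - Real.sign (z.1 - z.2) := by
    intro z
    rw [show z.2 - z.1 = -(z.1 - z.2) by ring, Real.sign_neg]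
  simp_rw [h2, integral_neg] at h
  linarith

lemma integral_kernel_zero (νX νY : Measure ℝ) [IsProbabilityMeasure νX]
    [IsProbabilityMeasure νY] :
    ∫ z : (ℝ×ℝ) × (ℝ×ℝ), Real.sign (z.1.1 - z.2.1) * Real.sign (z.1.2 - z.2.2)
      ∂((νX.prod νY).prod (νX.prod νY)) = 0 := by
  have hmF : Measurable fun z : (ℝ×ℝ) × (ℝ×ℝ) =>
      Real.sign (z.1.1 - z.2.1) * Real.sign (z.1.2 - z.2.2) :=
    (measurable_realSign.comp (measurable_fst.fst.sub measurable_snd.fst)).mul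
      (measurable_realSign.comp (measurable_fst.snd.sub measurable_snd.snd))
  have hint : Integrable (fun z : (ℝ×ℝ) × (ℝ×ℝ) =>
      Real.sign (z.1.1 - z.2.1) * Real.sign (z.1.2 - z.2.2))
      ((νX.prod νY).prod (νX.prod νY)) :=
    integrable_of_bounded hmF.aestronglyMeasurable 1 (fun z => abs_sign_mul_sign_le _ _)
  rw [integral_prod _ hint]
  have hin : ∀ p : ℝ × ℝ,
      (∫ q : ℝ × ℝ, Real.sign (p.1 - q.1) * Real.sign (p.2 - q.2) ∂(νX.prod νY))
        = (∫ x, Real.sign (p.1 - x) ∂νX) * ∫ y, Real.sign (p.2 - y) ∂νY := by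
    intro p
    exact integral_prod_mul (fun x => Real.sign (p.1 - x)) (fun y => Real.sign (p.2 - y))
  simp_rw [hin]
  rw [integral_prod_mul (fun x => ∫ x', Real.sign (x - x') ∂νX)
      (fun y => ∫ y', Real.sign (y - y') ∂νY)]
  have hX : (∫ x, (∫ x', Real.sign (x - x') ∂νX) ∂νX) = 0 := by
    have h1 : Integrable (fun z : ℝ × ℝ => Real.sign (z.1 - z.2)) (νX.prod νX) :=
      integrable_of_bounded
        ((measurable_realSign.comp (measurable_fst.sub measurable_snd)).aestronglyMeasurable)
        1 (fun z => abs_realSign_le _)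
    have := integral_prod (fun z : ℝ × ℝ => Real.sign (z.1 - z.2)) h1
    rw [← this, integral_sign_prod]
  rw [hX, zero_mul]

lemma mgf_single {Ω : Type*} [MeasurableSpace Ω] {μ : Measure Ω} [IsProbabilityMeasure μ]
    {g : Ω → ℝ} (hm : AEStronglyMeasurable g μ) (hb : ∀ ω, |g ω| ≤ 1)
    (h0 : ∫ ω, g ω ∂μ = 0) (u : ℝ) :
    ∫ ω, Real.exp (u * g ω) ∂μ ≤ Real.cosh u := by
  have hint : Integrable g μ := integrable_of_bounded hm 1 hb
  have hexpm : AEStronglyMeasurable (fun ω => Real.exp (u * g ω)) μ :=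
    ((Real.measurable_exp.comp_aemeasurable (hm.aemeasurable.const_mul u)).aestronglyMeasurable)
  have h1 : ∫ ω, Real.exp (u * g ω) ∂μ ≤ ∫ ω, (Real.cosh u + g ω * Real.sinh u) ∂μ := by
    refine integral_mono ?_ ?_ (fun ω => exp_mul_le (hb ω) u)
    · refine integrable_of_bounded hexpm (Real.exp |u|) ?_
      intro ω
      rw [abs_of_pos (Real.exp_pos _)]
      apply Real.exp_le_exp.2
      calc u * g ω ≤ |u * g ω| := le_abs_self _
      _ = |u| * |g ω| := abs_mul _ _
      _ ≤ |u| * 1 := by gcongr; exact hb ω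
      _ = |u| := mul_one _
    · exact (integrable_const _).add (hint.mul_const _)
  calc ∫ ω, Real.exp (u * g ω) ∂μ ≤ ∫ ω, (Real.cosh u + g ω * Real.sinh u) ∂μ := h1
  _ = Real.cosh u + (∫ ω, g ω ∂μ) * Real.sinh u := by
      rw [integral_add (integrable_const _) (hint.mul_const _), integral_const,
        probReal_univ, one_smul, integral_mul_const]
  _ = Real.cosh u := by rw [h0, zero_mul, add_zero]


lemma card_fiber_eq {n : ℕ} (p q : Fin n) {a b c d : Fin n}
    (hab : a ≠ b) (hcd : c ≠ d) :
    (Finset.univ.filter fun σ : Equiv.Perm (Fin n) => σ p = a ∧ σ q = b).card =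
    (Finset.univ.filter fun σ : Equiv.Perm (Fin n) => σ p = c ∧ σ q = d).card := by
  set π : Equiv.Perm (Fin n) := (Equiv.swap (Equiv.swap a c b) d) * (Equiv.swap a c) with hπ
  have hxc : Equiv.swap a c b ≠ c := by
    intro h
    apply hab
    have := congrArg (Equiv.swap a c) h
    rw [Equiv.swap_apply_self, Equiv.swap_apply_right] at this
    exact this.symm
  have hπa : π a = c := by
    rw [hπ, Equiv.Perm.mul_apply, Equiv.swap_apply_left,
      Equiv.swap_apply_of_ne_of_ne (Ne.symm hxc) hcd]
  have hπb : π b = d := by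
    rw [hπ, Equiv.Perm.mul_apply, Equiv.swap_apply_left]
  refine Finset.card_bij' (fun σ _ => π * σ) (fun τ _ => π⁻¹ * τ) ?_ ?_ ?_ ?_
  · intro σ hσ
    simp only [Finset.mem_filter, Finset.mem_univ, true_and] at hσ ⊢
    rw [show (π * σ) p = π (σ p) from rfl, show (π * σ) q = π (σ q) from rfl, hσ.1, hσ.2]
    exact ⟨hπa, hπb⟩
  · intro τ hτ
    simp only [Finset.mem_filter, Finset.mem_univ, true_and] at hτ ⊢
    rw [show (π⁻¹ * τ) p = π⁻¹ (τ p) from rfl, show (π⁻¹ * τ) q = π⁻¹ (τ q) from rfl, hτ.1, hτ.2]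
    constructor
    · rw [← hπa, Equiv.Perm.inv_def, Equiv.symm_apply_apply]
    · rw [← hπb, Equiv.Perm.inv_def, Equiv.symm_apply_apply]
  · intro σ _; group
  · intro τ _; group

/-- Sum over permutations of a function of `(σ p, σ q)` vanishing on the diagonal. -/
lemma perm_sum_eq {n : ℕ} (p q : Fin n) (hpq : p ≠ q) (F : Fin n × Fin n → ℝ)
    (hF : ∀ a, F (a, a) = 0) :
    ∑ σ : Equiv.Perm (Fin n), F (σ p, σ q) =
      ((Finset.univ.filter fun σ : Equiv.Perm (Fin n) => σ p = p ∧ σ q = q).card : ℝ) *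
        ∑ ab : Fin n × Fin n, F ab := by
  classical
  have key : ∑ σ : Equiv.Perm (Fin n), F (σ p, σ q)
      = ∑ ab : Fin n × Fin n,
          ∑ σ ∈ Finset.univ.filter (fun σ : Equiv.Perm (Fin n) => (σ p, σ q) = ab), F (σ p, σ q) :=
      (Finset.sum_fiberwise_of_maps_to (fun σ _ => Finset.mem_univ _) _).symm
  rw [key, Finset.mul_sum]
  refine Finset.sum_congr rfl fun ab _ => ?_
  by_cases hd : ab.1 = ab.2
  · have h1 : ∀ σ ∈ Finset.univ.filter
        (fun σ : Equiv.Perm (Fin n) => (σ p, σ q) = ab), F (σ p, σ q) = 0 := by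
      intro σ hσ
      simp only [Finset.mem_filter, Finset.mem_univ, true_and] at hσ
      exfalso
      have h2 : σ p = σ q := by
        have e1 : σ p = ab.1 := by rw [← hσ]
        have e2 : σ q = ab.2 := by rw [← hσ]
        rw [e1, e2, hd]
      exact hpq (σ.injective h2)
    rw [Finset.sum_congr rfl h1, Finset.sum_const_zero]
    have : F ab = 0 := by
      obtain ⟨x, y⟩ := ab
      simp only at hd
      rw [hd] at *
      exact hF y
    rw [this, mul_zero]
  · have h1 : ∀ σ ∈ Finset.univ.filter
        (fun σ : Equiv.Perm (Fin n) => (σ p, σ q) = ab), F (σ p, σ q) = F ab := by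
      intro σ hσ
      simp only [Finset.mem_filter, Finset.mem_univ, true_and] at hσ
      rw [hσ]
    rw [Finset.sum_congr rfl h1, Finset.sum_const, nsmul_eq_mul]
    congr 1
    have hfil : (Finset.univ.filter fun σ : Equiv.Perm (Fin n) => (σ p, σ q) = ab)
        = Finset.univ.filter fun σ : Equiv.Perm (Fin n) => σ p = ab.1 ∧ σ q = ab.2 := by
      apply Finset.filter_congr
      intro σ _
      simp [Prod.ext_iff]
    rw [hfil]
    norm_cast
    exact card_fiber_eq p q hd hpq
variable {Ω : Type*} [MeasurableSpace Ω] {μ : Measure Ω} [IsProbabilityMeasure μ]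
variable {k : ℕ} {Z : Fin k → Ω → ℝ × ℝ}

/-- The concordance kernel of indices `a b`. -/
def hker (Z : Fin k → Ω → ℝ × ℝ) (a b : Fin k) (ω : Ω) : ℝ :=
  Real.sign ((Z a ω).1 - (Z b ω).1) * Real.sign ((Z a ω).2 - (Z b ω).2)

lemma measurable_hker (hZm : ∀ i, Measurable (Z i)) (a b : Fin k) :
    Measurable (hker Z a b) :=
  ((measurable_realSign.comp (((hZm a).fst).sub ((hZm b).fst)))).mul
    ((measurable_realSign.comp (((hZm a).snd).sub ((hZm b).snd))))

lemma abs_hker_le (Z : Fin k → Ω → ℝ × ℝ) (a b : Fin k) (ω : Ω) : |hker Z a b ω| ≤ 1 :=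
  abs_sign_mul_sign_le _ _

lemma mgf_group {m : ℕ} (hZm : ∀ i, Measurable (Z i))
    (hindep : iIndepFun Z μ)
    (hmean : ∀ a b : Fin k, a ≠ b → ∫ ω, hker Z a b ω ∂μ = 0)
    (c1 c2 : Fin m → Fin k) (hc : ∀ i, c1 i ≠ c2 i)
    (hdisj : ∀ i j, i ≠ j → Disjoint ({c1 i, c2 i} : Finset (Fin k)) {c1 j, c2 j})
    (u : ℝ) (s : Finset (Fin m)) :
    ∫ ω, Real.exp (u * ∑ i ∈ s, hker Z (c1 i) (c2 i) ω) ∂μ ≤ Real.cosh u ^ s.card := by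
  classical
  induction s using Finset.induction_on with
  | empty => simp
  | @insert j s hj ih =>
    set S : Finset (Fin k) := s.biUnion (fun i => {c1 i, c2 i}) with hS
    set T : Finset (Fin k) := {c1 j, c2 j} with hT
    have hST : Disjoint S T := by
      rw [hS, Finset.disjoint_left]
      intro x hx hxT
      obtain ⟨i, hi, hxi⟩ := Finset.mem_biUnion.1 hx
      have hij : i ≠ j := fun h => hj (h ▸ hi)
      exact (Finset.disjoint_left.1 (hdisj i j hij)) hxi hxT
    have hbase := hindep.indepFun_finset S T hST hZm
    -- measurable maps from the tuples
    have hmem1 : ∀ i : {x // x ∈ s}, c1 i.1 ∈ S := fun i =>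
      Finset.mem_biUnion.2 ⟨i.1, i.2, by simp⟩
    have hmem2 : ∀ i : {x // x ∈ s}, c2 i.1 ∈ S := fun i =>
      Finset.mem_biUnion.2 ⟨i.1, i.2, by simp⟩
    set φ : ({x // x ∈ S} → ℝ × ℝ) → ℝ := fun v =>
      ∑ i ∈ s.attach, Real.sign ((v ⟨c1 i.1, hmem1 i⟩).1 - (v ⟨c2 i.1, hmem2 i⟩).1) *
        Real.sign ((v ⟨c1 i.1, hmem1 i⟩).2 - (v ⟨c2 i.1, hmem2 i⟩).2) with hφ
    set ψ : ({x // x ∈ T} → ℝ × ℝ) → ℝ := fun v =>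
      Real.sign ((v ⟨c1 j, by simp [hT]⟩).1 - (v ⟨c2 j, by simp [hT]⟩).1) *
        Real.sign ((v ⟨c1 j, by simp [hT]⟩).2 - (v ⟨c2 j, by simp [hT]⟩).2) with hψ
    have hφm : Measurable φ := by
      apply Finset.measurable_sum
      intro i _
      exact ((measurable_realSign.comp
          (((measurable_pi_apply _).fst).sub ((measurable_pi_apply _).fst))).mul
        (measurable_realSign.comp
          (((measurable_pi_apply _).snd).sub ((measurable_pi_apply _).snd))))
    have hψm : Measurable ψ :=
      ((measurable_realSign.comp
          (((measurable_pi_apply _).fst).sub ((measurable_pi_apply _).fst))).mul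
        (measurable_realSign.comp
          (((measurable_pi_apply _).snd).sub ((measurable_pi_apply _).snd))))
    have hIndep : IndepFun (fun ω => ∑ i ∈ s, hker Z (c1 i) (c2 i) ω)
        (hker Z (c1 j) (c2 j)) μ := by
      have h1 : (fun ω => ∑ i ∈ s, hker Z (c1 i) (c2 i) ω)
          = φ ∘ (fun ω (i : {x // x ∈ S}) => Z i.1 ω) := by
        funext ω
        rw [Function.comp_apply, hφ]
        exact (Finset.sum_attach s (fun i => hker Z (c1 i) (c2 i) ω)).symm
      have h2 : hker Z (c1 j) (c2 j) = ψ ∘ (fun ω (i : {x // x ∈ T}) => Z i.1 ω) := rfl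
      rw [h1, h2]
      exact hbase.comp hφm hψm
    have hIndepExp : IndepFun (fun ω => Real.exp (u * ∑ i ∈ s, hker Z (c1 i) (c2 i) ω))
        (fun ω => Real.exp (u * hker Z (c1 j) (c2 j) ω)) μ := by
      have hme : Measurable fun x : ℝ => Real.exp (u * x) :=
        Real.measurable_exp.comp (measurable_const.mul measurable_id)
      exact hIndep.comp hme hme
    have hmsum : Measurable (fun ω => ∑ i ∈ s, hker Z (c1 i) (c2 i) ω) :=
      Finset.measurable_sum _ (fun i _ => measurable_hker hZm _ _)
    have heq : ∀ ω, Real.exp (u * ∑ i ∈ insert j s, hker Z (c1 i) (c2 i) ω)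
        = Real.exp (u * ∑ i ∈ s, hker Z (c1 i) (c2 i) ω) *
          Real.exp (u * hker Z (c1 j) (c2 j) ω) := by
      intro ω
      rw [Finset.sum_insert hj, ← Real.exp_add]
      ring_nf
    simp_rw [heq]
    have hmul : ∫ ω, Real.exp (u * ∑ i ∈ s, hker Z (c1 i) (c2 i) ω) *
          Real.exp (u * hker Z (c1 j) (c2 j) ω) ∂μ
        = (∫ ω, Real.exp (u * ∑ i ∈ s, hker Z (c1 i) (c2 i) ω) ∂μ) *
          ∫ ω, Real.exp (u * hker Z (c1 j) (c2 j) ω) ∂μ :=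
      hIndepExp.integral_mul_eq_mul_integral
        ((Real.measurable_exp.comp (measurable_const.mul hmsum)).aestronglyMeasurable)
        ((Real.measurable_exp.comp
          (measurable_const.mul (measurable_hker hZm _ _))).aestronglyMeasurable)
    rw [hmul]
    have hb1 : ∫ ω, Real.exp (u * ∑ i ∈ s, hker Z (c1 i) (c2 i) ω) ∂μ ≤ Real.cosh u ^ s.card :=
      ih
    have hb2 : ∫ ω, Real.exp (u * hker Z (c1 j) (c2 j) ω) ∂μ ≤ Real.cosh u :=
      mgf_single (measurable_hker hZm _ _).aestronglyMeasurable
        (abs_hker_le Z _ _) (hmean _ _ (hc j)) u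
    rw [Finset.card_insert_of_notMem hj, pow_succ]
    have hnn1 : 0 ≤ ∫ ω, Real.exp (u * ∑ i ∈ s, hker Z (c1 i) (c2 i) ω) ∂μ :=
      integral_nonneg fun ω => (Real.exp_pos _).le
    have hnn2 : 0 ≤ ∫ ω, Real.exp (u * hker Z (c1 j) (c2 j) ω) ∂μ :=
      integral_nonneg fun ω => (Real.exp_pos _).le
    exact mul_le_mul hb1 hb2 hnn2 (le_trans hnn1 hb1)
lemma main_bound {Ω : Type*} [MeasurableSpace Ω] (μ : Measure Ω) [IsProbabilityMeasure μ]
    (k : ℕ) (hk : 2 ≤ k) (Z : Fin k → Ω → ℝ × ℝ) (hZm : ∀ i, Measurable (Z i))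
    (νX νY : Measure ℝ) [IsProbabilityMeasure νX] [IsProbabilityMeasure νY]
    (hindep : iIndepFun Z μ)
    (hlaw : ∀ i, Measure.map (Z i) μ = νX.prod νY) (r : ℝ) (hr : 0 < r) :
    (μ {ω | r < kendallTau k (fun i => (Z i ω).1) (fun i => (Z i ω).2) * Wfun k}).toReal
      ≤ Real.exp (-(r ^ 2) / 9) := by
  classical
  -- mean zero of the kernel
  have hmean : ∀ a b : Fin k, a ≠ b → ∫ ω, hker Z a b ω ∂μ = 0 := by
    intro a b hab
    have hIF : IndepFun (Z a) (Z b) μ := hindep.indepFun hab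
    have hmap : μ.map (fun ω => (Z a ω, Z b ω)) = (νX.prod νY).prod (νX.prod νY) := by
      rw [(indepFun_iff_map_prod_eq_prod_map_map ((hZm a).aemeasurable)
        ((hZm b).aemeasurable)).1 hIF, hlaw a, hlaw b]
    have hFm : Measurable (fun z : (ℝ×ℝ)×(ℝ×ℝ) =>
        Real.sign (z.1.1 - z.2.1) * Real.sign (z.1.2 - z.2.2)) :=
      (measurable_realSign.comp (measurable_fst.fst.sub measurable_snd.fst)).mul
        (measurable_realSign.comp (measurable_fst.snd.sub measurable_snd.snd))
    have heq : ∫ ω, hker Z a b ω ∂μ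
        = ∫ z : (ℝ×ℝ)×(ℝ×ℝ), Real.sign (z.1.1 - z.2.1) * Real.sign (z.1.2 - z.2.2)
            ∂((νX.prod νY).prod (νX.prod νY)) := by
      rw [← hmap, integral_map (((hZm a).prodMk (hZm b)).aemeasurable)
        hFm.aestronglyMeasurable]
      rfl
    rw [heq, integral_kernel_zero]
  -- basic numbers
  set m : ℕ := k / 2 with hm
  have hm1 : 1 ≤ m := by omega
  have h2m : 2 * m ≤ k := by omega
  have hk2m : k ≤ 2 * m + 1 := by omega
  have hkR : (2:ℝ) ≤ (k:ℝ) := by exact_mod_cast hk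
  -- index maps
  set e1 : Fin m → Fin k := fun i => ⟨2 * i.1, by have := i.isLt; omega⟩ with he1
  set e2 : Fin m → Fin k := fun i => ⟨2 * i.1 + 1, by have := i.isLt; omega⟩ with he2
  -- per permutation sums
  set V : Equiv.Perm (Fin k) → Ω → ℝ :=
    fun σ ω => ∑ i : Fin m, hker Z (σ (e1 i)) (σ (e2 i)) ω with hV
  have hVm : ∀ σ, Measurable (V σ) :=
    fun σ => Finset.measurable_sum _ (fun i _ => measurable_hker hZm _ _)
  have hVb : ∀ σ ω, |V σ ω| ≤ (m : ℝ) := by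
    intro σ ω
    calc |V σ ω| ≤ ∑ i : Fin m, |hker Z (σ (e1 i)) (σ (e2 i)) ω| :=
      Finset.abs_sum_le_sum_abs _ _
    _ ≤ ∑ _i : Fin m, (1:ℝ) := Finset.sum_le_sum (fun i _ => abs_hker_le Z _ _ ω)
    _ = (m : ℝ) := by simp
  have hVmgf : ∀ (σ : Equiv.Perm (Fin k)) (u : ℝ),
      ∫ ω, Real.exp (u * V σ ω) ∂μ ≤ Real.cosh u ^ m := by
    intro σ u
    have hc : ∀ i, σ (e1 i) ≠ σ (e2 i) := by
      intro i
      apply σ.injective.ne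
      intro h
      have := congrArg Fin.val h
      simp only [he1, he2] at this
      omega
    have hdisj : ∀ i j, i ≠ j →
        Disjoint ({σ (e1 i), σ (e2 i)} : Finset (Fin k)) {σ (e1 j), σ (e2 j)} := by
      intro i j hij
      have hvij : i.1 ≠ j.1 := fun h => hij (Fin.ext h)
      rw [Finset.disjoint_left]
      intro x hx hx'
      simp only [Finset.mem_insert, Finset.mem_singleton] at hx hx'
      have hinj : ∀ (a b : Fin k), σ a = σ b → a.1 = b.1 :=
        fun a b h => congrArg Fin.val (σ.injective h)
      rcases hx with h1 | h1 <;> rcases hx' with h2 | h2 <;>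
        · have := hinj _ _ (h1.symm.trans h2)
          simp only [he1, he2] at this
          omega
    have := mgf_group hZm hindep hmean (fun i => σ (e1 i)) (fun i => σ (e2 i)) hc hdisj u
      Finset.univ
    simpa using this

  -- concordance sum
  set D : Ω → ℝ := fun ω => ∑ a : Fin k, ∑ b : Fin k, if a ≠ b then hker Z a b ω else 0 with hD
  have hDm : Measurable D := by
    apply Finset.measurable_sum; intro a _
    apply Finset.measurable_sum; intro b _
    by_cases h : a ≠ b
    · simpa [h] using measurable_hker hZm a b
    · simp [h]
  have hDb : ∀ ω, |D ω| ≤ (k:ℝ)^2 := by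
    intro ω
    calc |D ω| ≤ ∑ a : Fin k, |∑ b : Fin k, if a ≠ b then hker Z a b ω else 0| :=
      Finset.abs_sum_le_sum_abs _ _
    _ ≤ ∑ a : Fin k, ∑ b : Fin k, |if a ≠ b then hker Z a b ω else 0| :=
      Finset.sum_le_sum fun a _ => Finset.abs_sum_le_sum_abs _ _
    _ ≤ ∑ _a : Fin k, ∑ _b : Fin k, (1:ℝ) := by
        refine Finset.sum_le_sum fun a _ => Finset.sum_le_sum fun b _ => ?_
        by_cases h : a ≠ b
        · simpa [h] using abs_hker_le Z a b ω
        · simp [h]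
    _ = (k:ℝ)^2 := by simp [sq]
  have he12 : ∀ i : Fin m, e1 i ≠ e2 i := by
    intro i h
    have := congrArg Fin.val h
    simp only [he1, he2] at this
    omega
  have hK2pos : (0:ℝ) < (k:ℝ)^2 - (k:ℝ) := by nlinarith
  have hNkpos : (0:ℝ) < (Nat.factorial k : ℝ) := by
    exact_mod_cast Nat.factorial_pos k
  have hmRpos : (0:ℝ) < (m:ℝ) := by exact_mod_cast hm1
  -- count identity
  have hsumF0 : (∑ ab : Fin k × Fin k, (if ab.1 ≠ ab.2 then (1:ℝ) else 0))
      = (k:ℝ)^2 - (k:ℝ) := by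
    rw [Fintype.sum_prod_type]
    have inner : ∀ a : Fin k, (∑ b : Fin k, if a ≠ b then (1:ℝ) else 0) = (k:ℝ) - 1 := by
      intro a
      have h1 : ∀ b : Fin k, (if a ≠ b then (1:ℝ) else 0)
          = 1 - (if a = b then (1:ℝ) else 0) := by
        intro b; by_cases h : a = b <;> simp [h]
      simp_rw [h1]
      rw [Finset.sum_sub_distrib, Finset.sum_const, Finset.sum_ite_eq]
      simp
    simp_rw [inner]
    rw [Finset.sum_const]
    simp only [Finset.card_univ, Fintype.card_fin, nsmul_eq_mul]
    ring
  have hcount : ∀ i : Fin m,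
      ((Finset.univ.filter fun σ : Equiv.Perm (Fin k) =>
        σ (e1 i) = e1 i ∧ σ (e2 i) = e2 i).card : ℝ) * ((k:ℝ)^2 - (k:ℝ))
        = (Nat.factorial k : ℝ) := by
    intro i
    have h := perm_sum_eq (e1 i) (e2 i) (he12 i)
      (fun ab => if ab.1 ≠ ab.2 then (1:ℝ) else 0) (by simp)
    simp only at h
    have hL : (∑ σ : Equiv.Perm (Fin k), (if σ (e1 i) ≠ σ (e2 i) then (1:ℝ) else 0))
        = (Nat.factorial k : ℝ) := by
      have h2 : ∀ σ : Equiv.Perm (Fin k),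
          (if σ (e1 i) ≠ σ (e2 i) then (1:ℝ) else 0) = 1 := by
        intro σ; rw [if_pos (σ.injective.ne (he12 i))]
      simp_rw [h2]
      rw [Finset.sum_const]
      simp [Fintype.card_perm, Fintype.card_fin]
    rw [hL, hsumF0] at h
    linarith
  -- pointwise permutation identity
  have hkey : ∀ ω, ∑ σ : Equiv.Perm (Fin k), V σ ω
      = (m:ℝ) * ((Nat.factorial k : ℝ) * D ω / ((k:ℝ)^2 - (k:ℝ))) := by
    intro ω
    have hper : ∀ i : Fin m, (∑ σ : Equiv.Perm (Fin k), hker Z (σ (e1 i)) (σ (e2 i)) ω)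
        = (Nat.factorial k : ℝ) * D ω / ((k:ℝ)^2 - (k:ℝ)) := by
      intro i
      have h := perm_sum_eq (e1 i) (e2 i) (he12 i)
        (fun ab => if ab.1 ≠ ab.2 then hker Z ab.1 ab.2 ω else 0) (by simp)
      simp only at h
      have hL : (∑ σ : Equiv.Perm (Fin k),
          (if σ (e1 i) ≠ σ (e2 i) then hker Z (σ (e1 i)) (σ (e2 i)) ω else 0))
          = ∑ σ : Equiv.Perm (Fin k), hker Z (σ (e1 i)) (σ (e2 i)) ω :=
        Finset.sum_congr rfl fun σ _ => if_pos (σ.injective.ne (he12 i))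
      have hsum : (∑ ab : Fin k × Fin k, if ab.1 ≠ ab.2 then hker Z ab.1 ab.2 ω else 0)
          = D ω := by
        rw [Fintype.sum_prod_type, hD]
      rw [hL, hsum] at h
      rw [h, eq_div_iff (ne_of_gt hK2pos)]
      linear_combination (D ω) * (hcount i)
    calc ∑ σ : Equiv.Perm (Fin k), V σ ω
        = ∑ i : Fin m, ∑ σ : Equiv.Perm (Fin k), hker Z (σ (e1 i)) (σ (e2 i)) ω :=
          Finset.sum_comm
    _ = ∑ _i : Fin m, (Nat.factorial k : ℝ) * D ω / ((k:ℝ)^2 - (k:ℝ)) :=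
          Finset.sum_congr rfl fun i _ => hper i
    _ = (m:ℝ) * ((Nat.factorial k : ℝ) * D ω / ((k:ℝ)^2 - (k:ℝ))) := by
          rw [Finset.sum_const]
          simp only [Finset.card_univ, Fintype.card_fin, nsmul_eq_mul]
  -- tau as function
  set τf : Ω → ℝ := fun ω =>
    kendallTau k (fun i => (Z i ω).1) (fun i => (Z i ω).2) with hτf
  have hτD : ∀ ω, τf ω = D ω / ((k:ℝ)^2 - (k:ℝ)) := by
    intro ω
    have h1 : concordSum Finset.univ (fun i => (Z i ω).1) (fun i => (Z i ω).2) = D ω := rfl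
    show concordSum Finset.univ (fun i => (Z i ω).1) (fun i => (Z i ω).2)
        / ((k:ℝ) * ((k:ℝ) - 1)) = D ω / ((k:ℝ)^2 - (k:ℝ))
    rw [h1, show (k:ℝ) * ((k:ℝ)-1) = (k:ℝ)^2 - (k:ℝ) from by ring]
  have hτm : Measurable τf := by
    have : τf = fun ω => D ω / ((k:ℝ)^2 - (k:ℝ)) := funext hτD
    rw [this]
    exact hDm.div_const _
  have hτb : ∀ ω, |τf ω| ≤ (k:ℝ)^2 := by
    intro ω
    rw [hτD ω, abs_div]
    have h1 : (1:ℝ) ≤ |(k:ℝ)^2 - (k:ℝ)| := by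
      rw [abs_of_pos hK2pos]; nlinarith
    calc |D ω| / |(k:ℝ)^2 - (k:ℝ)| ≤ |D ω| := div_le_self (abs_nonneg _) h1
    _ ≤ (k:ℝ)^2 := hDb ω
  have hτV : ∀ ω, τf ω = (∑ σ : Equiv.Perm (Fin k), V σ ω)
      / ((m:ℝ) * (Nat.factorial k : ℝ)) := by
    intro ω
    rw [hkey ω, hτD ω]
    field_simp
  -- the W constant
  have hWpos : 0 < Wfun k := by
    rw [Wfun]
    apply Real.sqrt_pos.2
    apply div_pos (by nlinarith) (by nlinarith)
  have hW2 : (Wfun k)^2 = 9*(k:ℝ)*((k:ℝ)-1)/(2*(2*(k:ℝ)+5)) := by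
    rw [Wfun]
    exact Real.sq_sqrt (le_of_lt (div_pos (by nlinarith) (by nlinarith)))
  set s0 : ℝ := r / Wfun k with hs0def
  have hs0 : 0 < s0 := div_pos hr hWpos
  set t : ℝ := (m:ℝ) * s0 with htdef
  have ht0 : 0 ≤ t := by positivity
  -- Jensen
  have hjen : ∀ ω, Real.exp (t * τf ω)
      ≤ ∑ σ : Equiv.Perm (Fin k), ((Nat.factorial k : ℝ))⁻¹ * Real.exp (s0 * V σ ω) := by
    intro ω
    have hsw : (∑ σ : Equiv.Perm (Fin k), ((Nat.factorial k : ℝ))⁻¹) = 1 := by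
      rw [Finset.sum_const]
      simp only [Finset.card_univ, Fintype.card_perm, Fintype.card_fin, nsmul_eq_mul]
      field_simp
    have harg : t * τf ω = ∑ σ : Equiv.Perm (Fin k),
        ((Nat.factorial k : ℝ))⁻¹ • (s0 * V σ ω) := by
      simp_rw [smul_eq_mul]
      rw [← Finset.mul_sum, ← Finset.mul_sum, hτV ω, htdef]
      field_simp
    have h := convexOn_exp.map_sum_le (t := (Finset.univ : Finset (Equiv.Perm (Fin k))))
      (w := fun _ => ((Nat.factorial k : ℝ))⁻¹) (p := fun σ => s0 * V σ ω)
      (fun _ _ => by positivity) hsw (fun _ _ => Set.mem_univ _)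
    rw [harg]
    exact h
  -- integrability
  have hintexp : ∀ (c B : ℝ) (f : Ω → ℝ), Measurable f → (∀ ω, |f ω| ≤ B) →
      Integrable (fun ω => Real.exp (c * f ω)) μ := by
    intro c B f hf hB
    refine integrable_of_bounded
      ((Real.measurable_exp.comp (measurable_const.mul hf)).aestronglyMeasurable)
      (Real.exp (|c| * B)) ?_
    intro ω
    rw [abs_of_pos (Real.exp_pos _)]
    apply Real.exp_le_exp.2
    calc c * f ω ≤ |c * f ω| := le_abs_self _
    _ = |c| * |f ω| := abs_mul _ _
    _ ≤ |c| * B := by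
        refine mul_le_mul_of_nonneg_left (hB ω) (abs_nonneg _)
  have hint1 : Integrable (fun ω => Real.exp (t * τf ω)) μ := hintexp t _ τf hτm hτb
  have hint2σ : ∀ σ : Equiv.Perm (Fin k),
      Integrable (fun ω => Real.exp (s0 * V σ ω)) μ :=
    fun σ => hintexp s0 (m:ℝ) (V σ) (hVm σ) (hVb σ)
  have hint2 : Integrable (fun ω => ∑ σ : Equiv.Perm (Fin k),
      ((Nat.factorial k : ℝ))⁻¹ * Real.exp (s0 * V σ ω)) μ :=
    integrable_finset_sum _ (fun σ _ => (hint2σ σ).const_mul _)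
  -- mgf bound
  have hmgf : mgf τf μ t ≤ Real.exp ((m:ℝ) * s0^2 / 2) := by
    have hmgfeq : mgf τf μ t = ∫ ω, Real.exp (t * τf ω) ∂μ := rfl
    rw [hmgfeq]
    calc ∫ ω, Real.exp (t * τf ω) ∂μ
        ≤ ∫ ω, ∑ σ : Equiv.Perm (Fin k),
            ((Nat.factorial k : ℝ))⁻¹ * Real.exp (s0 * V σ ω) ∂μ :=
          integral_mono hint1 hint2 hjen
    _ = ∑ σ : Equiv.Perm (Fin k),
          ((Nat.factorial k : ℝ))⁻¹ * ∫ ω, Real.exp (s0 * V σ ω) ∂μ := by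
        rw [integral_finset_sum _ (fun σ _ => (hint2σ σ).const_mul _)]
        exact Finset.sum_congr rfl fun σ _ => integral_const_mul _ _
    _ ≤ ∑ _σ : Equiv.Perm (Fin k),
          ((Nat.factorial k : ℝ))⁻¹ * Real.exp ((m:ℝ) * s0^2 / 2) := by
        refine Finset.sum_le_sum fun σ _ => ?_
        refine mul_le_mul_of_nonneg_left ?_ (by positivity)
        calc ∫ ω, Real.exp (s0 * V σ ω) ∂μ ≤ Real.cosh s0 ^ m := hVmgf σ s0
        _ ≤ Real.exp (s0^2/2) ^ m :=
            pow_le_pow_left₀ (le_of_lt (Real.cosh_pos _)) (Real.cosh_le_exp_half_sq s0) m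
        _ = Real.exp ((m:ℝ) * s0^2/2) := by
            rw [← Real.exp_nat_mul]
            congr 1
            ring
    _ = Real.exp ((m:ℝ) * s0^2 / 2) := by
        rw [Finset.sum_const]
        simp only [Finset.card_univ, Fintype.card_perm, Fintype.card_fin, nsmul_eq_mul]
        rw [← mul_assoc, mul_inv_cancel₀ (ne_of_gt hNkpos), one_mul]
  -- numeric comparison
  have hcombN : k*(k-1) ≤ m*(2*k+5) := by
    have h1 : k - 1 ≤ 2*m := by omega
    calc k*(k-1) ≤ k*(2*m) := Nat.mul_le_mul_left k h1
    _ = m*(2*k) := by ring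
    _ ≤ m*(2*k+5) := Nat.mul_le_mul_left m (by omega)
  have hcombR : (k:ℝ)*((k:ℝ)-1) ≤ (m:ℝ)*(2*(k:ℝ)+5) := by
    have h2 := (Nat.cast_le (α := ℝ)).2 hcombN
    push_cast [Nat.cast_sub (show 1 ≤ k by omega)] at h2
    nlinarith [h2]
  have h9m : 2*(Wfun k)^2 ≤ 9*(m:ℝ) := by
    have hden : (0:ℝ) < 2*(2*(k:ℝ)+5) := by nlinarith
    have h1 : (Wfun k)^2 * (2*(2*(k:ℝ)+5)) = 9*(k:ℝ)*((k:ℝ)-1) := by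
      rw [hW2]; field_simp
    nlinarith [h1, hcombR, hden]
  have hnum : r^2/9 ≤ (m:ℝ) * s0^2 / 2 := by
    have hs02 : s0^2 = r^2/(Wfun k)^2 := by rw [hs0def, div_pow]
    have hWne : Wfun k ≠ 0 := ne_of_gt hWpos
    have hrw : (m:ℝ) * s0^2 / 2 = (m:ℝ)*r^2/(2*(Wfun k)^2) := by
      rw [hs02]
      field_simp
    rw [hrw, div_le_div_iff₀ (by norm_num : (0:ℝ) < 9) (by positivity)]
    have h3 := mul_le_mul_of_nonneg_left h9m (sq_nonneg r)
    nlinarith [h3]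
  -- Chernoff assembly
  have hsub : {ω | r < τf ω * Wfun k} ⊆ {ω | s0 ≤ τf ω} := by
    intro ω hω
    simp only [Set.mem_setOf_eq] at hω ⊢
    rw [hs0def]
    exact ((div_lt_iff₀ hWpos).2 (by linarith)).le
  have hchern := measure_ge_le_exp_mul_mgf (μ := μ) (X := τf) s0 ht0 hint1
  show (μ {ω | r < τf ω * Wfun k}).toReal ≤ Real.exp (-(r ^ 2) / 9)
  calc (μ {ω | r < τf ω * Wfun k}).toReal
      ≤ (μ {ω | s0 ≤ τf ω}).toReal :=
        ENNReal.toReal_mono (measure_ne_top μ _) (measure_mono hsub)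
  _ ≤ Real.exp (-t * s0) * mgf τf μ t := hchern
  _ ≤ Real.exp (-t * s0) * Real.exp ((m:ℝ) * s0^2 / 2) :=
        mul_le_mul_of_nonneg_left hmgf (Real.exp_pos _).le
  _ = Real.exp (-((m:ℝ) * s0^2 / 2)) := by
        rw [← Real.exp_add]
        congr 1
        rw [htdef]
        ring
  _ ≤ Real.exp (-(r ^ 2) / 9) := by
        apply Real.exp_le_exp.2
        linarith


/-- transfer of `iIndepFun` along a.e. equality -/
lemma iIndepFun_ae_eq {Ω ι : Type*} [MeasurableSpace Ω] {μ : Measure Ω} [Countable ι]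
    {β : Type*} [MeasurableSpace β] {f g : ι → Ω → β}
    (hf : iIndepFun f μ) (h : ∀ i, f i =ᵐ[μ] g i) :
    iIndepFun g μ := by
  rw [iIndepFun_iff_measure_inter_preimage_eq_mul] at hf ⊢
  intro S sets hsets
  have hae : ∀ᵐ ω ∂μ, ∀ i, f i ω = g i ω := ae_all_iff.2 h
  have h1 : μ (⋂ i ∈ S, g i ⁻¹' sets i) = μ (⋂ i ∈ S, f i ⁻¹' sets i) := by
    apply measure_congr
    apply Filter.eventuallyEq_set.2
    filter_upwards [hae] with ω hω
    simp only [Set.mem_iInter, Set.mem_preimage]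
    constructor
    · intro hmem i hi; rw [hω i]; exact hmem i hi
    · intro hmem i hi; rw [← hω i]; exact hmem i hi
  have h2 : ∀ i ∈ S, μ (g i ⁻¹' sets i) = μ (f i ⁻¹' sets i) := by
    intro i _
    apply measure_congr
    apply Filter.eventuallyEq_set.2
    filter_upwards [h i] with ω hω
    simp only [Set.mem_preimage, hω]
  rw [h1, hf S hsets]
  exact (Finset.prod_congr rfl h2).symm


end KendallAux

open KendallAux

set_option maxHeartbeats 1000000 in
/-- Hoeffding-type tail bound for the normalized sample Kendall tau of `k ≥ 2`
i.i.d. pairs with independent, continuously distributed coordinates. -/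
theorem kendallTau_tail_bound {Ω : Type*} [MeasurableSpace Ω]
    (μ : Measure Ω) [IsProbabilityMeasure μ] (k : ℕ) (hk : 2 ≤ k)
    (X Y : Fin k → Ω → ℝ) (νX νY : Measure ℝ)
    [IsProbabilityMeasure νX] [IsProbabilityMeasure νY]
    (hcX : ∀ x : ℝ, νX {x} = 0) (hcY : ∀ y : ℝ, νY {y} = 0)
    (hindep : iIndepFun (fun i ω => (X i ω, Y i ω)) μ)
    (hlaw : ∀ i, Measure.map (fun ω => (X i ω, Y i ω)) μ = νX.prod νY) :
    ∀ r : ℝ, 0 < r →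
      (μ {ω | r < kendallTau k (fun i => X i ω) (fun i => Y i ω) * Wfun k}).toReal
        ≤ Real.exp (-(r ^ 2) / 9) := by
  intro r hr
  -- a.e. measurable upgrade
  have haem : ∀ i, AEMeasurable (fun ω => (X i ω, Y i ω)) μ := by
    intro i
    by_contra h
    have h0 := hlaw i
    rw [Measure.map_of_not_aemeasurable h] at h0
    have h1 := congrArg (fun ν : Measure (ℝ × ℝ) => ν Set.univ) h0
    simp only [Measure.coe_zero, Pi.zero_apply, measure_univ] at h1
    exact zero_ne_one h1
  set Z : Fin k → Ω → ℝ × ℝ := fun i => (haem i).mk _ with hZ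
  have hZm : ∀ i, Measurable (Z i) := fun i => (haem i).measurable_mk
  have hZae : ∀ i, (fun ω => (X i ω, Y i ω)) =ᵐ[μ] Z i := fun i => (haem i).ae_eq_mk
  have hZindep : iIndepFun Z μ := iIndepFun_ae_eq hindep hZae
  have hZlaw : ∀ i, Measure.map (Z i) μ = νX.prod νY := by
    intro i
    rw [← Measure.map_congr (hZae i)]
    exact hlaw i
  have hmain := main_bound μ k hk Z hZm νX νY hZindep hZlaw r hr
  refine le_trans (le_of_eq ?_) hmain
  congr 1
  apply measure_congr
  apply Filter.eventuallyEq_set.2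
  have hae : ∀ᵐ ω ∂μ, ∀ i, (X i ω, Y i ω) = Z i ω := ae_all_iff.2 hZae
  filter_upwards [hae] with ω hω
  have hX : (fun i => X i ω) = fun i => (Z i ω).1 := by
    funext i; rw [← hω i]
  have hY : (fun i => Y i ω) = fun i => (Z i ω).2 := by
    funext i; rw [← hω i]
  simp only [Set.mem_setOf_eq, hX, hY]


end
end

section
/- Let (X,Y) have joint CDF F with continuous marginals, fix thresholds η_X, η_Y with P(X > η_X, Y > η_Y) > 0, and let F_{η_X,η_Y} denote the conditional joint CDF of (X,Y) given X > η_X and Y > η_Y, with marginals F_{η_X} and F_{η_Y}. Suppose F_{η_X,η_Y} is positively quadrant dependent: F_{η_X,η_Y}(x,y) ≥ F_{η_X}(x)·F_{η_Y}(y) for all x,y, with strict inequality at some point (x₀,y₀). Then T(η_X,η_Y) > 0, where T(η_X,η_Y) = P((X−X̃)(Y−Ỹ)>0 | X,X̃>η_X, Y,Ỹ>η_Y) − P((X−X̃)(Y−Ỹ)<0 | X,X̃>η_X, Y,Ỹ>η_Y) for independent copies (X,Y), (X̃,Ỹ) of F. -/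
open MeasureTheory ProbabilityTheory Filter

noncomputable section

namespace TpopAux

open Set
open scoped ENNReal Topology


/-- Helper: measures agree when sets differ inside a null set. -/
lemma measure_eq_of_subset_null {α : Type*} [MeasurableSpace α] {μ : Measure α}
    {s t u : Set α} (hts : t ⊆ s) (hd : s \ t ⊆ u) (hu : μ u = 0) : μ s = μ t := by
  refine le_antisymm ?_ (measure_mono hts)
  calc μ s ≤ μ (t ∪ (s \ t)) := measure_mono (by intro x hx; by_cases h : x ∈ t <;> simp [h, hx])
    _ ≤ μ t + μ (s \ t) := measure_union_le _ _
    _ ≤ μ t + μ u := by gcongr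
    _ = μ t := by rw [hu, add_zero]

/-- The classical `∫ F dF = 1/2` for an atomless probability measure on `ℝ`. -/
lemma half (κ : Measure ℝ) [IsProbabilityMeasure κ] (h : ∀ x : ℝ, κ {x} = 0) :
    ∫⁻ x, κ (Iic x) ∂κ = 1 / 2 := by
  have hIio : ∀ x : ℝ, κ (Iio x) = κ (Iic x) := by
    intro x
    refine (measure_eq_of_subset_null (u := {x}) Iio_subset_Iic_self ?_ (h x)).symm
    intro y hy
    simp only [mem_diff, mem_Iic, mem_Iio, not_lt] at hy
    exact le_antisymm hy.1 hy.2
  have hmeas : MeasurableSet {z : ℝ × ℝ | z.2 < z.1} := measurableSet_lt measurable_snd measurable_fst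
  have hmeas' : MeasurableSet {z : ℝ × ℝ | z.1 < z.2} := measurableSet_lt measurable_fst measurable_snd
  set s := κ.prod κ {z : ℝ × ℝ | z.2 < z.1} with hs
  have h1 : s = ∫⁻ x, κ (Iic x) ∂κ := by
    rw [hs, Measure.prod_apply hmeas]
    exact lintegral_congr fun x => hIio x
  have hswap : κ.prod κ {z : ℝ × ℝ | z.1 < z.2} = s := by
    conv_lhs => rw [← Measure.prod_swap]
    rw [Measure.map_apply measurable_swap hmeas']
    rfl
  have hdiag : κ.prod κ {z : ℝ × ℝ | z.1 = z.2} = 0 := by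
    rw [Measure.prod_apply (measurableSet_eq_fun measurable_fst measurable_snd)]
    have : ∀ x : ℝ, κ (Prod.mk x ⁻¹' {z : ℝ × ℝ | z.1 = z.2}) = 0 := by
      intro x
      have : (Prod.mk x ⁻¹' {z : ℝ × ℝ | z.1 = z.2}) = {x} := by
        ext y; simp [eq_comm]
      rw [this]; exact h x
    simp only [this, lintegral_zero]
  have huniv : ({z : ℝ × ℝ | z.2 < z.1} ∪ {z : ℝ × ℝ | z.1 < z.2}) ∪ {z : ℝ × ℝ | z.1 = z.2}
      = univ := by
    ext z
    simp only [mem_union, mem_setOf_eq, mem_univ, iff_true]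
    rcases lt_trichotomy z.1 z.2 with h' | h' | h'
    · exact Or.inl (Or.inr h')
    · exact Or.inr h'
    · exact Or.inl (Or.inl h')
  have hsum : s + s + 0 = 1 := by
    calc s + s + 0 = κ.prod κ ({z : ℝ × ℝ | z.2 < z.1} ∪ {z : ℝ × ℝ | z.1 < z.2})
          + κ.prod κ {z : ℝ × ℝ | z.1 = z.2} := by
          rw [hdiag, measure_union ?_ hmeas']
          · rw [hswap]
          · intro a ha hb x hx
            have := ha hx; have := hb hx
            simp only [mem_setOf_eq] at *
            exact absurd (lt_trans ‹x.2 < x.1› ‹x.1 < x.2›) (lt_irrefl _)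
      _ = κ.prod κ (({z : ℝ × ℝ | z.2 < z.1} ∪ {z : ℝ × ℝ | z.1 < z.2}) ∪ {z : ℝ × ℝ | z.1 = z.2}) := by
          rw [measure_union ?_ (measurableSet_eq_fun measurable_fst measurable_snd)]
          intro a ha hb x hx
          have h1 := ha hx; have h2 := hb hx
          simp only [mem_union, mem_setOf_eq] at h1 h2
          rcases h1 with h1 | h1 <;> simp_all [lt_irrefl, ne_of_gt, ne_of_lt]
      _ = 1 := by rw [huniv]; simp
  rw [add_zero] at hsum
  rw [← h1]
  rw [ENNReal.eq_div_iff (by norm_num) (by norm_num), two_mul, hsum]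


lemma half_proj (μ : Measure (ℝ × ℝ)) [IsProbabilityMeasure μ] {f : ℝ × ℝ → ℝ}
    (hf : Measurable f) (h : ∀ x : ℝ, μ {p | f p = x} = 0) :
    ∫⁻ p, μ {q | f q ≤ f p} ∂μ = 1 / 2 := by
  set κ := μ.map f with hκ
  have hinst : IsProbabilityMeasure κ := Measure.isProbabilityMeasure_map hf.aemeasurable
  have hIic : ∀ x : ℝ, κ (Iic x) = μ {q | f q ≤ x} := by
    intro x
    rw [hκ, Measure.map_apply hf measurableSet_Iic]
    rfl
  have hatom : ∀ x : ℝ, κ {x} = 0 := by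
    intro x
    rw [hκ, Measure.map_apply hf (measurableSet_singleton x)]
    exact h x
  have hmono : Monotone fun x => κ (Iic x) := fun a b hab => measure_mono (Iic_subset_Iic.2 hab)
  have := half κ hatom
  rw [hκ, lintegral_map hmono.measurable hf] at this
  rw [← this]
  exact lintegral_congr fun p => (hIic (f p)).symm

lemma prod_self_swap {α : Type*} [MeasurableSpace α] (μ : Measure α) [SFinite μ]
    {s : Set (α × α)} (hs : MeasurableSet s) :
    μ.prod μ (Prod.swap ⁻¹' s) = μ.prod μ s := by
  conv_rhs => rw [← Measure.prod_swap]
  rw [Measure.map_apply measurable_swap hs]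


lemma shift (μ : Measure (ℝ × ℝ)) [IsProbabilityMeasure μ] (h1 : ∀ x : ℝ, μ {p | p.1 = x} = 0)
    (x0 : ℝ) (hL : μ {p | p.1 ≤ x0} ≠ 0) :
    ∃ x1 : ℝ, x1 ≤ x0 ∧ μ {p | x1 < p.1 ∧ p.1 ≤ x0} = 0 ∧
      (∀ ε : ℝ, 0 < ε → μ {p | x1 - ε < p.1 ∧ p.1 ≤ x1} ≠ 0) ∧
      (∀ c : ℝ≥0∞, c ≠ 0 → ∃ ε : ℝ, 0 < ε ∧ μ {p | x1 - ε < p.1 ∧ p.1 ≤ x1} < c) := by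
  have hmeasle : ∀ x : ℝ, MeasurableSet {p : ℝ × ℝ | p.1 ≤ x} := fun x =>
    measurable_fst measurableSet_Iic
  have hmeasstrip : ∀ a b : ℝ, MeasurableSet {p : ℝ × ℝ | a < p.1 ∧ p.1 ≤ b} := fun a b =>
    measurable_fst measurableSet_Ioc
  set g : ℝ → ℝ≥0∞ := fun x => μ {p : ℝ × ℝ | p.1 ≤ x} with hg
  have gmono : Monotone g := fun a b hab => measure_mono (fun p hp => le_trans hp hab)
  -- right continuity
  have hr : ∀ x : ℝ, Tendsto (fun n : ℕ => g (x + 1 / (n + 1))) atTop (𝓝 (g x)) := by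
    intro x
    have hI : ⋂ n : ℕ, {p : ℝ × ℝ | p.1 ≤ x + 1 / (n + 1)} = {p : ℝ × ℝ | p.1 ≤ x} := by
      ext p
      simp only [mem_iInter, mem_setOf_eq]
      constructor
      · intro hp
        by_contra hlt
        push_neg at hlt
        obtain ⟨n, hn⟩ := exists_nat_one_div_lt (sub_pos.2 hlt)
        have := hp n
        linarith
      · intro hp n
        have : (0 : ℝ) < 1 / (n + 1) := by positivity
        linarith
    have := tendsto_measure_iInter_atTop (μ := μ)
      (s := fun n : ℕ => {p : ℝ × ℝ | p.1 ≤ x + 1 / (n + 1)})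
      (fun n => (hmeasle _).nullMeasurableSet)
      (fun m n hmn p hp => by
        simp only [mem_setOf_eq] at hp ⊢
        have h1n : 1 / ((n : ℝ) + 1) ≤ 1 / ((m : ℝ) + 1) := by
          apply one_div_le_one_div_of_le
          · positivity
          · exact_mod_cast add_le_add_left (Nat.cast_le.2 hmn) 1
        linarith)
      ⟨0, measure_ne_top _ _⟩
    rwa [hI] at this
  -- strips shrink to the atom
  have hstrip : ∀ x : ℝ, Tendsto (fun n : ℕ => μ {p : ℝ × ℝ | x - 1 / (n + 1) < p.1 ∧ p.1 ≤ x})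
      atTop (𝓝 0) := by
    intro x
    have hI : ⋂ n : ℕ, {p : ℝ × ℝ | x - 1 / (n + 1) < p.1 ∧ p.1 ≤ x} = {p : ℝ × ℝ | p.1 = x} := by
      ext p
      simp only [mem_iInter, mem_setOf_eq]
      constructor
      · intro hp
        by_contra hne
        have hlt : p.1 < x := lt_of_le_of_ne (hp 0).2 hne
        obtain ⟨n, hn⟩ := exists_nat_one_div_lt (sub_pos.2 hlt)
        have := (hp n).1
        linarith
      · intro hp n
        have : (0 : ℝ) < 1 / (n + 1) := by positivity
        rw [hp]
        constructor
        · linarith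
        · exact le_rfl
    have := tendsto_measure_iInter_atTop (μ := μ)
      (s := fun n : ℕ => {p : ℝ × ℝ | x - 1 / (n + 1) < p.1 ∧ p.1 ≤ x})
      (fun n => (hmeasstrip _ _).nullMeasurableSet)
      (fun m n hmn p hp => by
        simp only [mem_setOf_eq] at hp ⊢
        have h1n : 1 / ((n : ℝ) + 1) ≤ 1 / ((m : ℝ) + 1) := by
          apply one_div_le_one_div_of_le
          · positivity
          · exact_mod_cast add_le_add_left (Nat.cast_le.2 hmn) 1
        exact ⟨by linarith [hp.1], hp.2⟩)
      ⟨0, measure_ne_top _ _⟩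
    rwa [hI, h1 x] at this
  -- mass escapes at -infinity
  have hdown : Tendsto (fun n : ℕ => g (x0 - n)) atTop (𝓝 0) := by
    have hI : ⋂ n : ℕ, {p : ℝ × ℝ | p.1 ≤ x0 - n} = (∅ : Set (ℝ × ℝ)) := by
      ext p
      simp only [mem_iInter, mem_setOf_eq, mem_empty_iff_false, iff_false, not_forall, not_le]
      obtain ⟨n, hn⟩ := exists_nat_gt (x0 - p.1)
      exact ⟨n, by linarith⟩
    have := tendsto_measure_iInter_atTop (μ := μ)
      (s := fun n : ℕ => {p : ℝ × ℝ | p.1 ≤ x0 - n})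
      (fun n => (hmeasle _).nullMeasurableSet)
      (fun m n hmn p hp => by
        simp only [mem_setOf_eq] at hp ⊢
        have : (m : ℝ) ≤ n := Nat.cast_le.2 hmn
        linarith)
      ⟨0, measure_ne_top _ _⟩
    rwa [hI, measure_empty] at this
  -- additivity over strips
  have hadd : ∀ a b : ℝ, a ≤ b → g a + μ {p : ℝ × ℝ | a < p.1 ∧ p.1 ≤ b} = g b := by
    intro a b hab
    rw [hg]
    rw [← measure_union ?_ (hmeasstrip a b)]
    · congr 1
      ext p
      simp only [mem_union, mem_setOf_eq]
      constructor
      · rintro (hp | hp)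
        · exact le_trans hp hab
        · exact hp.2
      · intro hp
        rcases le_or_gt p.1 a with h' | h'
        · exact Or.inl h'
        · exact Or.inr ⟨h', hp⟩
    · intro u hu hv p hp
      have h1p := hu hp
      have h2p := hv hp
      simp only [mem_setOf_eq] at h1p h2p
      exact absurd h1p (not_le.2 h2p.1)
  obtain ⟨m, hm⟩ : ∃ n : ℕ, g (x0 - n) < g x0 :=
    (hdown.eventually_lt_const (pos_iff_ne_zero.2 hL)).exists
  set S : Set ℝ := {x : ℝ | g x0 ≤ g x} with hS
  have hS0 : x0 ∈ S := by
    rw [hS, mem_setOf_eq]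
  have hbdd : BddBelow S := by
    refine ⟨x0 - m, fun z hz => ?_⟩
    by_contra hzm
    push_neg at hzm
    have : g x0 ≤ g (x0 - m) := le_trans hz (gmono hzm.le)
    exact absurd this (not_le.2 hm)
  set x1 : ℝ := sInf S with hx1
  have hx1le : x1 ≤ x0 := csInf_le hbdd hS0
  have hkey : ∀ x : ℝ, x1 < x → g x0 ≤ g x := by
    intro x hx
    obtain ⟨z, hzS, hzx⟩ := (csInf_lt_iff hbdd ⟨x0, hS0⟩).1 hx
    exact le_trans hzS (gmono hzx.le)
  have hgx1 : g x1 = g x0 := by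
    refine le_antisymm (gmono hx1le) (ge_of_tendsto (hr x1) (Eventually.of_forall fun n => ?_))
    exact hkey _ (lt_add_of_pos_right _ (by positivity))
  refine ⟨x1, hx1le, ?_, ?_, ?_⟩
  · have h := hadd x1 x0 hx1le
    rw [hgx1] at h
    nth_rewrite 2 [← add_zero (g x0)] at h
    exact (ENNReal.add_right_inj (measure_ne_top μ _)).1 h
  · intro ε hε h0
    have hgeq : g (x1 - ε) = g x1 := by
      have h := hadd (x1 - ε) x1 (by linarith)
      rwa [h0, add_zero] at h
    have hmem : x1 - ε ∈ S := by
      rw [hS, mem_setOf_eq, hgeq, hgx1]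
    have := csInf_le hbdd hmem
    rw [← hx1] at this
    linarith
  · intro c hc
    obtain ⟨n, hn⟩ := ((hstrip x1).eventually_lt_const (pos_iff_ne_zero.2 hc)).exists
    exact ⟨1 / (n + 1), by positivity, hn⟩


lemma shift2 (μ : Measure (ℝ × ℝ)) [IsProbabilityMeasure μ] (h2 : ∀ y : ℝ, μ {p | p.2 = y} = 0)
    (y0 : ℝ) (hL : μ {p | p.2 ≤ y0} ≠ 0) :
    ∃ y1 : ℝ, y1 ≤ y0 ∧ μ {p | y1 < p.2 ∧ p.2 ≤ y0} = 0 ∧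
      (∀ ε : ℝ, 0 < ε → μ {p | y1 - ε < p.2 ∧ p.2 ≤ y1} ≠ 0) ∧
      (∀ c : ℝ≥0∞, c ≠ 0 → ∃ ε : ℝ, 0 < ε ∧ μ {p | y1 - ε < p.2 ∧ p.2 ≤ y1} < c) := by
  set μ' : Measure (ℝ × ℝ) := μ.map Prod.swap with hμ'
  have hinst : IsProbabilityMeasure μ' := Measure.isProbabilityMeasure_map measurable_swap.aemeasurable
  have happ : ∀ s : Set (ℝ × ℝ), MeasurableSet s → μ' s = μ (Prod.swap ⁻¹' s) := fun s hs =>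
    Measure.map_apply measurable_swap hs
  have h1' : ∀ x : ℝ, μ' {p | p.1 = x} = 0 := by
    intro x
    rw [happ {p | p.1 = x} (by exact measurable_fst (measurableSet_singleton x))]
    exact h2 x
  have hL' : μ' {p | p.1 ≤ y0} ≠ 0 := by
    rw [happ {p | p.1 ≤ y0} (by exact measurable_fst measurableSet_Iic)]
    exact hL
  obtain ⟨y1, hy1le, hz, hpos, hsmall⟩ := shift μ' h1' y0 hL'
  refine ⟨y1, hy1le, ?_, ?_, ?_⟩
  · rw [happ {p | y1 < p.1 ∧ p.1 ≤ y0} (by exact measurable_fst measurableSet_Ioc)] at hz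
    exact hz
  · intro ε hε
    have := hpos ε hε
    rwa [happ {p | y1 - ε < p.1 ∧ p.1 ≤ y1} (by exact measurable_fst measurableSet_Ioc)] at this
  · intro c hc
    obtain ⟨ε, hε, hlt⟩ := hsmall c hc
    rw [happ {p | y1 - ε < p.1 ∧ p.1 ≤ y1} (by exact measurable_fst measurableSet_Ioc)] at hlt
    exact ⟨ε, hε, hlt⟩

lemma goodpoint (μ : Measure (ℝ × ℝ)) [IsProbabilityMeasure μ]
    (h1 : ∀ x : ℝ, μ {p | p.1 = x} = 0) (h2 : ∀ y : ℝ, μ {p | p.2 = y} = 0)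
    (x0 y0 : ℝ)
    (hgap : (μ {p | p.1 ≤ x0}).toReal * (μ {p | p.2 ≤ y0}).toReal
      < (μ {p | p.1 ≤ x0 ∧ p.2 ≤ y0}).toReal) :
    ∃ (x1 y1 ε1 ε2 δ : ℝ), 0 < ε1 ∧ 0 < ε2 ∧ 0 < δ ∧
      μ {p | x1 - ε1 < p.1 ∧ p.1 ≤ x1} ≠ 0 ∧
      μ {p | y1 - ε2 < p.2 ∧ p.2 ≤ y1} ≠ 0 ∧
      (∀ u v : ℝ, x1 - ε1 < u → u ≤ x1 → y1 - ε2 < v → v ≤ y1 →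
        (μ {p | p.1 ≤ u}).toReal * (μ {p | p.2 ≤ v}).toReal + δ
          ≤ (μ {p | p.1 ≤ u ∧ p.2 ≤ v}).toReal) := by
  set A := (μ {p | p.1 ≤ x0}).toReal * (μ {p | p.2 ≤ y0}).toReal with hA
  set c := (μ {p | p.1 ≤ x0 ∧ p.2 ≤ y0}).toReal - A with hc
  have hcpos : 0 < c := sub_pos.2 hgap
  have hfx0pos : 0 < (μ {p | p.1 ≤ x0 ∧ p.2 ≤ y0}).toReal :=
    lt_of_le_of_lt (mul_nonneg ENNReal.toReal_nonneg ENNReal.toReal_nonneg) hgap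
  have hLx : μ {p | p.1 ≤ x0} ≠ 0 := by
    intro h0
    have hsub : μ {p | p.1 ≤ x0 ∧ p.2 ≤ y0} = 0 :=
      measure_mono_null (fun p hp => hp.1) h0
    rw [hsub] at hfx0pos
    simp at hfx0pos
  have hLy : μ {p | p.2 ≤ y0} ≠ 0 := by
    intro h0
    have hsub : μ {p | p.1 ≤ x0 ∧ p.2 ≤ y0} = 0 :=
      measure_mono_null (fun p hp => hp.2) h0
    rw [hsub] at hfx0pos
    simp at hfx0pos
  obtain ⟨x1, hx1le, hz1, hpos1, hsmall1⟩ := shift μ h1 x0 hLx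
  obtain ⟨y1, hy1le, hz2, hpos2, hsmall2⟩ := shift2 μ h2 y0 hLy
  have hc4 : ENNReal.ofReal (c / 4) ≠ 0 := by
    simp only [ne_eq, ENNReal.ofReal_eq_zero, not_le]
    linarith
  obtain ⟨ε1, hε1, hs1⟩ := hsmall1 _ hc4
  obtain ⟨ε2, hε2, hs2⟩ := hsmall2 _ hc4
  refine ⟨x1, y1, ε1, ε2, c / 2, hε1, hε2, by linarith, hpos1 ε1 hε1, hpos2 ε2 hε2, ?_⟩
  intro u v hu1 hu2 hv1 hv2
  have E1 : μ {p | p.1 ≤ x0} = μ {p | p.1 ≤ x1} :=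
    measure_eq_of_subset_null (fun p hp => le_trans hp hx1le)
      (fun p hp => by
        simp only [mem_diff, mem_setOf_eq, not_le] at hp
        exact ⟨hp.2, hp.1⟩) hz1
  have E2 : μ {p | p.2 ≤ y0} = μ {p | p.2 ≤ y1} :=
    measure_eq_of_subset_null (fun p hp => le_trans hp hy1le)
      (fun p hp => by
        simp only [mem_diff, mem_setOf_eq, not_le] at hp
        exact ⟨hp.2, hp.1⟩) hz2
  have E3 : μ {p | p.1 ≤ x0 ∧ p.2 ≤ y0} = μ {p | p.1 ≤ x1 ∧ p.2 ≤ y1} := by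
    refine measure_eq_of_subset_null
      (fun p hp => ⟨le_trans hp.1 hx1le, le_trans hp.2 hy1le⟩)
      (fun p hp => ?_) (measure_union_null hz1 hz2)
    simp only [mem_diff, mem_setOf_eq, not_and_or, not_le] at hp
    obtain ⟨⟨hpx, hpy⟩, hcase⟩ := hp
    rcases hcase with h' | h'
    · exact Or.inl ⟨h', hpx⟩
    · exact Or.inr ⟨h', hpy⟩
  have hf1u : (μ {p | p.1 ≤ u}).toReal ≤ (μ {p | p.1 ≤ x0}).toReal := by
    rw [E1]
    exact ENNReal.toReal_mono (measure_ne_top _ _)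
      (measure_mono fun p hp => le_trans hp hu2)
  have hf2v : (μ {p | p.2 ≤ v}).toReal ≤ (μ {p | p.2 ≤ y0}).toReal := by
    rw [E2]
    exact ENNReal.toReal_mono (measure_ne_top _ _)
      (measure_mono fun p hp => le_trans hp hv2)
  have hprod : (μ {p | p.1 ≤ u}).toReal * (μ {p | p.2 ≤ v}).toReal ≤ A :=
    mul_le_mul hf1u hf2v ENNReal.toReal_nonneg ENNReal.toReal_nonneg
  have hcover : μ {p | p.1 ≤ x1 ∧ p.2 ≤ y1}
      ≤ μ {p | p.1 ≤ u ∧ p.2 ≤ v} + μ {p | x1 - ε1 < p.1 ∧ p.1 ≤ x1}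
        + μ {p | y1 - ε2 < p.2 ∧ p.2 ≤ y1} := by
    calc μ {p | p.1 ≤ x1 ∧ p.2 ≤ y1}
        ≤ μ (({p : ℝ × ℝ | p.1 ≤ u ∧ p.2 ≤ v} ∪ {p : ℝ × ℝ | x1 - ε1 < p.1 ∧ p.1 ≤ x1})
            ∪ {p : ℝ × ℝ | y1 - ε2 < p.2 ∧ p.2 ≤ y1}) := by
          refine measure_mono fun p hp => ?_
          simp only [mem_setOf_eq, mem_union] at hp ⊢
          rcases le_or_gt p.1 u with hpu | hpu
          · rcases le_or_gt p.2 v with hpv | hpv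
            · exact Or.inl (Or.inl ⟨hpu, hpv⟩)
            · exact Or.inr ⟨lt_trans hv1 hpv, hp.2⟩
          · exact Or.inl (Or.inr ⟨lt_trans hu1 hpu, hp.1⟩)
      _ ≤ μ ({p : ℝ × ℝ | p.1 ≤ u ∧ p.2 ≤ v} ∪ {p : ℝ × ℝ | x1 - ε1 < p.1 ∧ p.1 ≤ x1})
          + μ {p : ℝ × ℝ | y1 - ε2 < p.2 ∧ p.2 ≤ y1} := measure_union_le _ _
      _ ≤ _ := by
          gcongr
          exact measure_union_le _ _
  have hcov' : (μ {p | p.1 ≤ x1 ∧ p.2 ≤ y1}).toReal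
      ≤ (μ {p | p.1 ≤ u ∧ p.2 ≤ v}).toReal
        + (μ {p | x1 - ε1 < p.1 ∧ p.1 ≤ x1}).toReal
        + (μ {p | y1 - ε2 < p.2 ∧ p.2 ≤ y1}).toReal := by
    have hne : μ {p : ℝ × ℝ | p.1 ≤ u ∧ p.2 ≤ v} + μ {p : ℝ × ℝ | x1 - ε1 < p.1 ∧ p.1 ≤ x1}
        + μ {p : ℝ × ℝ | y1 - ε2 < p.2 ∧ p.2 ≤ y1} ≠ ∞ := by finiteness
    have h := ENNReal.toReal_mono hne hcover
    rwa [ENNReal.toReal_add (by finiteness) (by finiteness),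
      ENNReal.toReal_add (by finiteness) (by finiteness)] at h
  have hs1' : (μ {p | x1 - ε1 < p.1 ∧ p.1 ≤ x1}).toReal < c / 4 :=
    ENNReal.toReal_lt_of_lt_ofReal hs1
  have hs2' : (μ {p | y1 - ε2 < p.2 ∧ p.2 ≤ y1}).toReal < c / 4 :=
    ENNReal.toReal_lt_of_lt_ofReal hs2
  have hE3' : (μ {p | p.1 ≤ x0 ∧ p.2 ≤ y0}).toReal = (μ {p | p.1 ≤ x1 ∧ p.2 ≤ y1}).toReal := by
    rw [E3]
  linarith


theorem core (μ : Measure (ℝ × ℝ)) [IsProbabilityMeasure μ]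
    (h1 : ∀ x : ℝ, μ {p | p.1 = x} = 0) (h2 : ∀ y : ℝ, μ {p | p.2 = y} = 0)
    (hPQD : ∀ x y : ℝ, (μ {p | p.1 ≤ x}).toReal * (μ {p | p.2 ≤ y}).toReal
      ≤ (μ {p | p.1 ≤ x ∧ p.2 ≤ y}).toReal)
    (hstrict : ∃ x y : ℝ, (μ {p | p.1 ≤ x}).toReal * (μ {p | p.2 ≤ y}).toReal
      < (μ {p | p.1 ≤ x ∧ p.2 ≤ y}).toReal) :
    0 < ((μ.prod μ) {w | 0 < (w.1.1 - w.2.1) * (w.1.2 - w.2.2)}).toReal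
      - ((μ.prod μ) {w | (w.1.1 - w.2.1) * (w.1.2 - w.2.2) < 0}).toReal := by
  -- measurable sets
  have hClt : MeasurableSet {w : (ℝ × ℝ) × ℝ × ℝ | w.2.1 < w.1.1 ∧ w.2.2 < w.1.2} :=
    (measurableSet_lt measurable_snd.fst measurable_fst.fst).inter
      (measurableSet_lt measurable_snd.snd measurable_fst.snd)
  have hDlt : MeasurableSet {w : (ℝ × ℝ) × ℝ × ℝ | w.2.1 < w.1.1 ∧ w.1.2 < w.2.2} :=
    (measurableSet_lt measurable_snd.fst measurable_fst.fst).inter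
      (measurableSet_lt measurable_fst.snd measurable_snd.snd)
  set c := μ.prod μ {w : (ℝ × ℝ) × ℝ × ℝ | w.2.1 < w.1.1 ∧ w.2.2 < w.1.2} with hcdef
  set d := μ.prod μ {w : (ℝ × ℝ) × ℝ × ℝ | w.2.1 < w.1.1 ∧ w.1.2 < w.2.2} with hddef
  -- step A : splitting by sign
  have hC : μ.prod μ {w : (ℝ × ℝ) × ℝ × ℝ | 0 < (w.1.1 - w.2.1) * (w.1.2 - w.2.2)} = c + c := by
    have hset : {w : (ℝ × ℝ) × ℝ × ℝ | 0 < (w.1.1 - w.2.1) * (w.1.2 - w.2.2)}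
        = {w : (ℝ × ℝ) × ℝ × ℝ | w.2.1 < w.1.1 ∧ w.2.2 < w.1.2}
          ∪ Prod.swap ⁻¹' {w : (ℝ × ℝ) × ℝ × ℝ | w.2.1 < w.1.1 ∧ w.2.2 < w.1.2} := by
      ext w
      simp only [mem_setOf_eq, mem_union, mem_preimage, Prod.fst_swap, Prod.snd_swap,
        mul_pos_iff, sub_pos, sub_neg]
    have hdisj : Disjoint {w : (ℝ × ℝ) × ℝ × ℝ | w.2.1 < w.1.1 ∧ w.2.2 < w.1.2}
        (Prod.swap ⁻¹' {w : (ℝ × ℝ) × ℝ × ℝ | w.2.1 < w.1.1 ∧ w.2.2 < w.1.2}) := by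
      rw [Set.disjoint_left]
      rintro w ⟨ha, _⟩ hb
      simp only [mem_preimage, mem_setOf_eq, Prod.fst_swap, Prod.snd_swap] at hb
      exact absurd (lt_trans ha hb.1) (lt_irrefl _)
    rw [hset, measure_union hdisj (measurable_swap hClt), prod_self_swap μ hClt]
  have hD : μ.prod μ {w : (ℝ × ℝ) × ℝ × ℝ | (w.1.1 - w.2.1) * (w.1.2 - w.2.2) < 0} = d + d := by
    have hset : {w : (ℝ × ℝ) × ℝ × ℝ | (w.1.1 - w.2.1) * (w.1.2 - w.2.2) < 0}
        = {w : (ℝ × ℝ) × ℝ × ℝ | w.2.1 < w.1.1 ∧ w.1.2 < w.2.2}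
          ∪ Prod.swap ⁻¹' {w : (ℝ × ℝ) × ℝ × ℝ | w.2.1 < w.1.1 ∧ w.1.2 < w.2.2} := by
      ext w
      simp only [mem_setOf_eq, mem_union, mem_preimage, Prod.fst_swap, Prod.snd_swap,
        mul_neg_iff, sub_pos, sub_neg]
    have hdisj : Disjoint {w : (ℝ × ℝ) × ℝ × ℝ | w.2.1 < w.1.1 ∧ w.1.2 < w.2.2}
        (Prod.swap ⁻¹' {w : (ℝ × ℝ) × ℝ × ℝ | w.2.1 < w.1.1 ∧ w.1.2 < w.2.2}) := by
      rw [Set.disjoint_left]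
      rintro w ⟨ha, _⟩ hb
      simp only [mem_preimage, mem_setOf_eq, Prod.fst_swap, Prod.snd_swap] at hb
      exact absurd (lt_trans ha hb.1) (lt_irrefl _)
    rw [hset, measure_union hdisj (measurable_swap hDlt), prod_self_swap μ hDlt]
  -- measures of strict and non-strict quadrants agree
  have hlt1 : ∀ x : ℝ, μ {q : ℝ × ℝ | q.1 < x} = μ {q : ℝ × ℝ | q.1 ≤ x} := by
    intro x
    refine (measure_eq_of_subset_null (s := {q : ℝ × ℝ | q.1 ≤ x}) (t := {q : ℝ × ℝ | q.1 < x})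
      (u := {q : ℝ × ℝ | q.1 = x}) (fun q hq => show q.1 ≤ x from le_of_lt hq) (fun q hq => ?_) (h1 x)).symm
    simp only [mem_diff, mem_setOf_eq, not_lt] at hq
    exact le_antisymm hq.1 hq.2
  have hlt2 : ∀ y : ℝ, μ {q : ℝ × ℝ | q.2 < y} = μ {q : ℝ × ℝ | q.2 ≤ y} := by
    intro y
    refine (measure_eq_of_subset_null (s := {q : ℝ × ℝ | q.2 ≤ y}) (t := {q : ℝ × ℝ | q.2 < y})
      (u := {q : ℝ × ℝ | q.2 = y}) (fun q hq => show q.2 ≤ y from le_of_lt hq) (fun q hq => ?_) (h2 y)).symm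
    simp only [mem_diff, mem_setOf_eq, not_lt] at hq
    exact le_antisymm hq.1 hq.2
  have hlt12 : ∀ x y : ℝ, μ {q : ℝ × ℝ | q.1 < x ∧ q.2 < y} = μ {q : ℝ × ℝ | q.1 ≤ x ∧ q.2 ≤ y} := by
    intro x y
    refine (measure_eq_of_subset_null (s := {q : ℝ × ℝ | q.1 ≤ x ∧ q.2 ≤ y})
      (t := {q : ℝ × ℝ | q.1 < x ∧ q.2 < y})
      (u := {q : ℝ × ℝ | q.1 = x} ∪ {q : ℝ × ℝ | q.2 = y})
      (fun q hq => ⟨le_of_lt hq.1, le_of_lt hq.2⟩) (fun q hq => ?_)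
      (measure_union_null (h1 x) (h2 y))).symm
    simp only [mem_diff, mem_setOf_eq, not_and_or, not_lt, mem_union] at hq ⊢
    obtain ⟨⟨hx, hy⟩, hcase⟩ := hq
    rcases hcase with h' | h'
    · exact Or.inl (le_antisymm hx h')
    · exact Or.inr (le_antisymm hy h')
  -- step B : c as an integral of the cdf, and c + d = 1/2
  have hcint : c = ∫⁻ p, μ {q : ℝ × ℝ | q.1 ≤ p.1 ∧ q.2 ≤ p.2} ∂μ := by
    rw [hcdef, Measure.prod_apply hClt]
    exact lintegral_congr fun p => hlt12 p.1 p.2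
  have hcd : c + d = 1 / 2 := by
    rw [hcdef, hddef, Measure.prod_apply hClt, Measure.prod_apply hDlt,
      ← lintegral_add_left (measurable_measure_prodMk_left hClt)]
    have hpt : ∀ p : ℝ × ℝ,
        μ (Prod.mk p ⁻¹' {w : (ℝ × ℝ) × ℝ × ℝ | w.2.1 < w.1.1 ∧ w.2.2 < w.1.2})
          + μ (Prod.mk p ⁻¹' {w : (ℝ × ℝ) × ℝ × ℝ | w.2.1 < w.1.1 ∧ w.1.2 < w.2.2})
        = μ {q : ℝ × ℝ | q.1 ≤ p.1} := by
      intro p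
      have e1 : Prod.mk p ⁻¹' {w : (ℝ × ℝ) × ℝ × ℝ | w.2.1 < w.1.1 ∧ w.2.2 < w.1.2}
          = {q : ℝ × ℝ | q.1 < p.1 ∧ q.2 < p.2} := rfl
      have e2 : Prod.mk p ⁻¹' {w : (ℝ × ℝ) × ℝ × ℝ | w.2.1 < w.1.1 ∧ w.1.2 < w.2.2}
          = {q : ℝ × ℝ | q.1 < p.1 ∧ p.2 < q.2} := rfl
      have hdisj : Disjoint {q : ℝ × ℝ | q.1 < p.1 ∧ q.2 < p.2} {q : ℝ × ℝ | q.1 < p.1 ∧ p.2 < q.2} := by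
        rw [Set.disjoint_left]
        rintro q ⟨_, hq2⟩ hq'
        exact absurd (lt_trans hq2 hq'.2) (lt_irrefl _)
      rw [e1, e2, ← measure_union hdisj
        ((measurableSet_lt measurable_fst measurable_const).inter
          (measurableSet_lt measurable_const measurable_snd))]
      have huni : μ ({q : ℝ × ℝ | q.1 < p.1 ∧ q.2 < p.2} ∪ {q : ℝ × ℝ | q.1 < p.1 ∧ p.2 < q.2})
          = μ {q : ℝ × ℝ | q.1 < p.1} := by
        refine (measure_eq_of_subset_null (s := {q : ℝ × ℝ | q.1 < p.1})
          (t := {q : ℝ × ℝ | q.1 < p.1 ∧ q.2 < p.2} ∪ {q : ℝ × ℝ | q.1 < p.1 ∧ p.2 < q.2})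
          (u := {q : ℝ × ℝ | q.2 = p.2})
          (fun q hq => hq.elim (fun h => h.1) fun h => h.1) (fun q hq => ?_) (h2 p.2)).symm
        simp only [mem_diff, mem_setOf_eq, mem_union, not_or, not_and_or, not_lt] at hq ⊢
        obtain ⟨hq1, hcase1, hcase2⟩ := hq
        rcases hcase1 with h' | h'
        · exact absurd hq1 (not_lt.2 h')
        · rcases hcase2 with h'' | h''
          · exact absurd hq1 (not_lt.2 h'')
          · exact le_antisymm h'' h'
      rw [huni, hlt1 p.1]
    rw [lintegral_congr hpt]
    exact half_proj μ measurable_fst h1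
  -- the PQD inequality in ennreal form
  have hPQD_E : ∀ x y : ℝ, μ {q : ℝ × ℝ | q.1 ≤ x} * μ {q : ℝ × ℝ | q.2 ≤ y}
      ≤ μ {q : ℝ × ℝ | q.1 ≤ x ∧ q.2 ≤ y} := by
    intro x y
    have h := hPQD x y
    rw [← ENNReal.toReal_mul] at h
    exact (ENNReal.toReal_le_toReal
      (ENNReal.mul_ne_top (measure_ne_top _ _) (measure_ne_top _ _)) (measure_ne_top _ _)).1 h
  -- the key comparison
  -- measurable cdf-type functions
  have hF1meas : Measurable fun x : ℝ => μ {q : ℝ × ℝ | q.1 ≤ x} :=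
    Monotone.measurable fun a b hab => measure_mono fun q hq => le_trans hq hab
  have hF2meas : Measurable fun y : ℝ => μ {q : ℝ × ℝ | q.2 ≤ y} :=
    Monotone.measurable fun a b hab => measure_mono fun q hq => le_trans hq hab
  have hSs : Measurable fun z : ℝ × ℝ => μ {q : ℝ × ℝ | z.1 ≤ q.1 ∧ z.2 ≤ q.2} := by
    have hset : MeasurableSet {zq : (ℝ × ℝ) × ℝ × ℝ | zq.1.1 ≤ zq.2.1 ∧ zq.1.2 ≤ zq.2.2} :=
      (measurableSet_le measurable_fst.fst measurable_snd.fst).inter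
        (measurableSet_le measurable_fst.snd measurable_snd.snd)
    exact measurable_measure_prodMk_left hset
  have hhalf1 : ∫⁻ p, μ {q : ℝ × ℝ | q.1 ≤ p.1} ∂μ = 1 / 2 := half_proj μ measurable_fst h1
  have hhalf2 : ∫⁻ p, μ {q : ℝ × ℝ | q.2 ≤ p.2} ∂μ = 1 / 2 := half_proj μ measurable_snd h2
  have hmain : 1 / 4 < c := by
    set X := ∫⁻ p, μ {q : ℝ × ℝ | q.1 ≤ p.1} * μ {q : ℝ × ℝ | q.2 ≤ p.2} ∂μ with hXdef
    have hcX : X ≤ c := by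
      rw [hcint]
      exact lintegral_mono fun p => hPQD_E p.1 p.2
    have hEm : MeasurableSet {z : (ℝ × ℝ) × (ℝ × ℝ) × ℝ × ℝ | z.2.1.1 ≤ z.1.1 ∧ z.2.2.2 ≤ z.1.2} :=
      (measurableSet_le measurable_snd.fst.fst measurable_fst.fst).inter
        (measurableSet_le measurable_snd.snd.snd measurable_fst.snd)
    have hXE : X = μ.prod (μ.prod μ) {z : (ℝ × ℝ) × (ℝ × ℝ) × ℝ × ℝ | z.2.1.1 ≤ z.1.1 ∧ z.2.2.2 ≤ z.1.2} := by
      rw [Measure.prod_apply hEm, hXdef]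
      refine lintegral_congr fun p => ?_
      have e : Prod.mk p ⁻¹' {z : (ℝ × ℝ) × (ℝ × ℝ) × ℝ × ℝ | z.2.1.1 ≤ z.1.1 ∧ z.2.2.2 ≤ z.1.2}
          = {q : ℝ × ℝ | q.1 ≤ p.1} ×ˢ {q : ℝ × ℝ | q.2 ≤ p.2} := rfl
      rw [e, Measure.prod_prod]
    have hIE : μ.prod (μ.prod μ) {z : (ℝ × ℝ) × (ℝ × ℝ) × ℝ × ℝ | z.2.1.1 ≤ z.1.1 ∧ z.2.2.2 ≤ z.1.2}
        = ∫⁻ w, μ {q : ℝ × ℝ | w.1.1 ≤ q.1 ∧ w.2.2 ≤ q.2} ∂(μ.prod μ) := by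
      rw [Measure.prod_apply_symm hEm]
      rfl
    -- survival identity
    have hsurv : ∀ u v : ℝ, μ {q : ℝ × ℝ | u ≤ q.1 ∧ v ≤ q.2}
        + (μ {q : ℝ × ℝ | q.1 ≤ u} + μ {q : ℝ × ℝ | q.2 ≤ v})
        = 1 + μ {q : ℝ × ℝ | q.1 ≤ u ∧ q.2 ≤ v} := by
      intro u v
      have hm1 : MeasurableSet {q : ℝ × ℝ | q.1 < u} := measurable_fst measurableSet_Iio
      have hm2 : MeasurableSet {q : ℝ × ℝ | q.2 < v} := measurable_snd measurableSet_Iio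
      have hcompl : {q : ℝ × ℝ | u ≤ q.1 ∧ v ≤ q.2}
          = ({q : ℝ × ℝ | q.1 < u} ∪ {q : ℝ × ℝ | q.2 < v})ᶜ := by
        ext q
        simp [not_or, not_lt]
      rw [hcompl, measure_compl (hm1.union hm2) (measure_ne_top _ _), measure_univ,
        ← hlt1 u, ← hlt2 v, ← measure_union_add_inter _ hm2, ← add_assoc,
        tsub_add_cancel_of_le prob_le_one, ← hlt12 u v, Set.setOf_and]
    -- integrate the survival identity over μ ⊗ μ
    have hf1' : Measurable fun p : ℝ × ℝ => μ {q : ℝ × ℝ | q.1 ≤ p.1} :=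
      hF1meas.comp measurable_fst
    have hf2' : Measurable fun p : ℝ × ℝ => μ {q : ℝ × ℝ | q.2 ≤ p.2} :=
      hF2meas.comp measurable_snd
    have hSs' : Measurable fun w : (ℝ × ℝ) × ℝ × ℝ => μ {q : ℝ × ℝ | w.1.1 ≤ q.1 ∧ w.2.2 ≤ q.2} :=
      hSs.comp (measurable_fst.fst.prodMk measurable_snd.snd)
    have hf1w : Measurable fun w : (ℝ × ℝ) × ℝ × ℝ => μ {q : ℝ × ℝ | q.1 ≤ w.1.1} :=
      hF1meas.comp measurable_fst.fst
    have hf2w : Measurable fun w : (ℝ × ℝ) × ℝ × ℝ => μ {q : ℝ × ℝ | q.2 ≤ w.2.2} :=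
      hF2meas.comp measurable_snd.snd
    have hmap1 : ∫⁻ w : (ℝ × ℝ) × ℝ × ℝ, μ {q : ℝ × ℝ | q.1 ≤ w.1.1} ∂(μ.prod μ) = 1 / 2 := by
      rw [← lintegral_map hf1' measurable_fst, Measure.map_fst_prod, measure_univ, one_smul]
      exact hhalf1
    have hmap2 : ∫⁻ w : (ℝ × ℝ) × ℝ × ℝ, μ {q : ℝ × ℝ | q.2 ≤ w.2.2} ∂(μ.prod μ) = 1 / 2 := by
      rw [← lintegral_map hf2' measurable_snd, Measure.map_snd_prod, measure_univ, one_smul]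
      exact hhalf2
    have hL : ∫⁻ w, (μ {q : ℝ × ℝ | w.1.1 ≤ q.1 ∧ w.2.2 ≤ q.2}
        + (μ {q : ℝ × ℝ | q.1 ≤ w.1.1} + μ {q : ℝ × ℝ | q.2 ≤ w.2.2})) ∂(μ.prod μ)
        = ∫⁻ w, (1 + μ {q : ℝ × ℝ | q.1 ≤ w.1.1 ∧ q.2 ≤ w.2.2}) ∂(μ.prod μ) :=
      lintegral_congr fun w => hsurv w.1.1 w.2.2
    rw [lintegral_add_left hSs', lintegral_add_left hf1w,
      lintegral_add_left measurable_const, lintegral_one, measure_univ,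
      hmap1, hmap2] at hL
    set I := ∫⁻ w : (ℝ × ℝ) × ℝ × ℝ, μ {q : ℝ × ℝ | q.1 ≤ w.1.1 ∧ q.2 ≤ w.2.2} ∂(μ.prod μ)
      with hIdef
    have hXI : X = I := by
      have h' : X + (1 / 2 + 1 / 2) = 1 + I := by
        rw [hXE, hIE]
        exact hL
      rw [ENNReal.add_halves 1, add_comm X 1] at h'
      exact (ENNReal.add_right_inj ENNReal.one_ne_top).1 h'
    -- the box argument
    obtain ⟨x0, y0, hgap⟩ := hstrict
    obtain ⟨x1, y1, ε1, ε2, δ, hε1, hε2, hδ, hS1ne, hS2ne, hbound⟩ := goodpoint μ h1 h2 x0 y0 hgap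
    set S1 : Set (ℝ × ℝ) := {p | x1 - ε1 < p.1 ∧ p.1 ≤ x1} with hS1def
    set S2 : Set (ℝ × ℝ) := {p | y1 - ε2 < p.2 ∧ p.2 ≤ y1} with hS2def
    have hS1m : MeasurableSet S1 := measurable_fst measurableSet_Ioc
    have hS2m : MeasurableSet S2 := measurable_snd measurableSet_Ioc
    have hpoint : ∀ w : (ℝ × ℝ) × ℝ × ℝ, μ {q : ℝ × ℝ | q.1 ≤ w.1.1} * μ {q : ℝ × ℝ | q.2 ≤ w.2.2}
        + (S1 ×ˢ S2).indicator (fun _ => ENNReal.ofReal δ) w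
        ≤ μ {q : ℝ × ℝ | q.1 ≤ w.1.1 ∧ q.2 ≤ w.2.2} := by
      intro w
      by_cases hw : w ∈ S1 ×ˢ S2
      · rw [indicator_of_mem hw]
        obtain ⟨⟨hw1, hw2⟩, hw3, hw4⟩ := hw
        have hr := hbound w.1.1 w.2.2 hw1 hw2 hw3 hw4
        calc μ {q : ℝ × ℝ | q.1 ≤ w.1.1} * μ {q : ℝ × ℝ | q.2 ≤ w.2.2} + ENNReal.ofReal δ
            = ENNReal.ofReal ((μ {q : ℝ × ℝ | q.1 ≤ w.1.1}).toReal
                * (μ {q : ℝ × ℝ | q.2 ≤ w.2.2}).toReal + δ) := by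
              rw [ENNReal.ofReal_add (mul_nonneg ENNReal.toReal_nonneg ENNReal.toReal_nonneg)
                  (le_of_lt hδ), ENNReal.ofReal_mul ENNReal.toReal_nonneg,
                ENNReal.ofReal_toReal (measure_ne_top _ _),
                ENNReal.ofReal_toReal (measure_ne_top _ _)]
          _ ≤ ENNReal.ofReal ((μ {q : ℝ × ℝ | q.1 ≤ w.1.1 ∧ q.2 ≤ w.2.2}).toReal) :=
              ENNReal.ofReal_le_ofReal hr
          _ = μ {q : ℝ × ℝ | q.1 ≤ w.1.1 ∧ q.2 ≤ w.2.2} :=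
              ENNReal.ofReal_toReal (measure_ne_top _ _)
      · rw [indicator_of_notMem hw, add_zero]
        exact hPQD_E w.1.1 w.2.2
    have hq : ∫⁻ w : (ℝ × ℝ) × ℝ × ℝ,
        μ {q : ℝ × ℝ | q.1 ≤ w.1.1} * μ {q : ℝ × ℝ | q.2 ≤ w.2.2} ∂(μ.prod μ)
        = (∫⁻ p, μ {q : ℝ × ℝ | q.1 ≤ p.1} ∂μ) * ∫⁻ p, μ {q : ℝ × ℝ | q.2 ≤ p.2} ∂μ :=
      lintegral_prod_mul hf1'.aemeasurable hf2'.aemeasurable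
    have hbox : ∫⁻ w, (μ {q : ℝ × ℝ | q.1 ≤ w.1.1} * μ {q : ℝ × ℝ | q.2 ≤ w.2.2}
        + (S1 ×ˢ S2).indicator (fun _ => ENNReal.ofReal δ) w) ∂(μ.prod μ)
        = 1 / 4 + ENNReal.ofReal δ * (μ S1 * μ S2) := by
      rw [lintegral_add_left (show Measurable fun w : (ℝ × ℝ) × ℝ × ℝ =>
          μ {q : ℝ × ℝ | q.1 ≤ w.1.1} * μ {q : ℝ × ℝ | q.2 ≤ w.2.2} from hf1w.mul hf2w), lintegral_indicator_const (hS1m.prod hS2m),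
        Measure.prod_prod, hq, hhalf1, hhalf2]
      congr 1
      norm_num
      rw [← ENNReal.mul_inv (by norm_num) (by norm_num)]
      norm_num
    have hI14 : 1 / 4 < I := by
      have hne : ENNReal.ofReal δ * (μ S1 * μ S2) ≠ 0 :=
        mul_ne_zero (ENNReal.ofReal_pos.2 hδ).ne' (mul_ne_zero hS1ne hS2ne)
      calc (1 : ℝ≥0∞) / 4 < 1 / 4 + ENNReal.ofReal δ * (μ S1 * μ S2) :=
            ENNReal.lt_add_right (by norm_num) hne
        _ = _ := hbox.symm
        _ ≤ I := lintegral_mono hpoint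
    calc (1 : ℝ≥0∞) / 4 < I := hI14
      _ = X := hXI.symm
      _ ≤ c := hcX
  -- conclusion
  -- conclusion
  have hcfin : c ≠ ∞ := measure_ne_top _ _
  have hdfin : d ≠ ∞ := measure_ne_top _ _
  have hsum : c.toReal + d.toReal = 1 / 2 := by
    rw [← ENNReal.toReal_add hcfin hdfin, hcd]
    simp [ENNReal.toReal_div]
  have hcR : 1 / 4 < c.toReal := by
    have := (ENNReal.toReal_lt_toReal (by norm_num) hcfin).2 hmain
    simpa [ENNReal.toReal_div] using this
  rw [hC, hD, ENNReal.toReal_add hcfin hcfin, ENNReal.toReal_add hdfin hdfin]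
  linarith

end TpopAux


/-- if the conditional distribution of `(X,Y)` given `X > η_X, Y > η_Y` is
positively quadrant dependent (with strict inequality somewhere), then `T(η_X, η_Y) > 0`. -/
theorem Tpop_pos_of_PQD (ν : Measure (ℝ × ℝ)) [IsProbabilityMeasure ν]
    (hcont : ContinuousMarginals ν) (ηX ηY : ℝ)
    (hpos : 0 < ν {p | ηX < p.1 ∧ ηY < p.2})
    (hPQD : ∀ x y : ℝ,
      ((ν[|{p | ηX < p.1 ∧ ηY < p.2}]) {p | p.1 ≤ x}).toReal *
          ((ν[|{p | ηX < p.1 ∧ ηY < p.2}]) {p | p.2 ≤ y}).toReal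
        ≤ ((ν[|{p | ηX < p.1 ∧ ηY < p.2}]) {p | p.1 ≤ x ∧ p.2 ≤ y}).toReal)
    (hstrict : ∃ x y : ℝ,
      ((ν[|{p | ηX < p.1 ∧ ηY < p.2}]) {p | p.1 ≤ x}).toReal *
          ((ν[|{p | ηX < p.1 ∧ ηY < p.2}]) {p | p.2 ≤ y}).toReal
        < ((ν[|{p | ηX < p.1 ∧ ηY < p.2}]) {p | p.1 ≤ x ∧ p.2 ≤ y}).toReal) :
    0 < Tpop ν ηX ηY := by
  set A := {p : ℝ × ℝ | ηX < p.1 ∧ ηY < p.2} with hAdef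
  have hA : MeasurableSet A :=
    (measurableSet_lt measurable_const measurable_fst).inter
      (measurableSet_lt measurable_const measurable_snd)
  have hr0 : ν A ≠ 0 := hpos.ne'
  have hrtop : ν A ≠ ⊤ := measure_ne_top ν A
  have hprob : IsProbabilityMeasure (ν[|A]) := cond_isProbabilityMeasure hr0
  have h1 : ∀ x : ℝ, (ν[|A]) {p | p.1 = x} = 0 := by
    intro x
    rw [cond_apply hA, measure_mono_null Set.inter_subset_right (hcont x).1, mul_zero]
  have h2 : ∀ y : ℝ, (ν[|A]) {p | p.2 = y} = 0 := by
    intro y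
    rw [cond_apply hA, measure_mono_null Set.inter_subset_right (hcont y).2, mul_zero]
  have hpair : pairAbove ηX ηY = A ×ˢ A := by
    ext w
    simp only [pairAbove, Set.mem_setOf_eq, Set.mem_prod, hAdef]
    tauto
  have hprodeq : (ν[|A]).prod (ν[|A]) = (ν.prod ν)[|pairAbove ηX ηY] := by
    rw [hpair]
    refine Measure.prod_eq fun s t hs ht => ?_
    rw [cond_apply (hA.prod hA), Set.prod_inter_prod, Measure.prod_prod, Measure.prod_prod,
      cond_apply hA, cond_apply hA, ENNReal.mul_inv (Or.inl hr0) (Or.inl hrtop),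
      mul_mul_mul_comm]
  have hcore := TpopAux.core (ν[|A]) h1 h2 hPQD hstrict
  rw [Tpop, ← hprodeq]
  exact hcore

end
end

section
/- Let (X,Y) be uniformly distributed on [0,1]², let j, k be positive integers, set U_j = 1 − 2^{−j} and U_k = 1 − 2^{−k}, and let γ_j, γ_k ∈ [0,1]. Then E[f_{(U_j,γ_j)}(X,Y)·f_{(U_k,γ_k)}(X,Y)] = 1 + γ_j γ_k (1−U_j)(1−U_k) / (9·2^{3|j−k|}). -/
open MeasureTheory ProbabilityTheory Filter

noncomputable section

/-- The Farlie–Gumbel–Morgenstern-type density `f_{(U,γ)}` on `[0,1]²`. -/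
def fgm (U γ x y : ℝ) : ℝ :=
  if U ≤ x ∧ U ≤ y then
    1 + γ * (1 - 2 * (x - U) / (1 - U)) * (1 - 2 * (y - U) / (1 - U))
  else 1

/-- The probability distribution on `[0,1]²` with density `f_{(U,γ)}`. -/
def fgmMeasure (U γ : ℝ) : Measure (ℝ × ℝ) :=
  (volume.restrict (Set.Icc (0 : ℝ) 1 ×ˢ Set.Icc (0 : ℝ) 1)).withDensity
    fun p => ENNReal.ofReal (fgm U γ p.1 p.2)


def gaux (U x : ℝ) : ℝ := if U ≤ x then 1 - 2 * (x - U) / (1 - U) else 0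

lemma fgm_eq' (U γ x y : ℝ) : fgm U γ x y = 1 + γ * (gaux U x * gaux U y) := by
  unfold fgm gaux
  by_cases hx : U ≤ x <;> by_cases hy : U ≤ y <;> simp [hx, hy] <;> ring

lemma gaux_eq (U : ℝ) : gaux U = Set.indicator (Set.Ici U) (fun x => 1 - 2 * (x - U) / (1 - U)) := by
  funext x
  by_cases hx : U ≤ x <;> simp [gaux, hx, Set.indicator_of_mem, Set.indicator_of_notMem]

lemma gaux_integrable (U : ℝ) : IntegrableOn (gaux U) (Set.Icc (0:ℝ) 1) := by
  rw [gaux_eq]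
  have hc : Continuous (fun x : ℝ => 1 - 2 * (x - U) / (1 - U)) := by continuity
  exact (hc.integrableOn_Icc).indicator measurableSet_Ici

lemma gmul_eq {U V : ℝ} (hUV : U ≤ V) :
    (fun x => gaux U x * gaux V x) = Set.indicator (Set.Ici V)
      (fun x => (1 - 2 * (x - U) / (1 - U)) * (1 - 2 * (x - V) / (1 - V))) := by
  funext x
  by_cases hv : V ≤ x
  · simp [gaux, hv, hUV.trans hv, Set.indicator_of_mem]
  · simp [gaux, hv, Set.indicator_of_notMem, Set.mem_Ici]

lemma gmul_integrable {U V : ℝ} (hUV : U ≤ V) :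
    IntegrableOn (fun x => gaux U x * gaux V x) (Set.Icc (0:ℝ) 1) := by
  rw [gmul_eq hUV]
  have hc : Continuous (fun x : ℝ => (1 - 2 * (x - U) / (1 - U)) * (1 - 2 * (x - V) / (1 - V))) := by continuity
  exact (hc.integrableOn_Icc).indicator measurableSet_Ici

lemma inter_eq {U : ℝ} (h0 : 0 ≤ U) : Set.Icc (0:ℝ) 1 ∩ Set.Ici U = Set.Icc U 1 := by
  ext x
  simp only [Set.mem_inter_iff, Set.mem_Icc, Set.mem_Ici]
  constructor
  · rintro ⟨⟨_, hx1⟩, hxu⟩; exact ⟨hxu, hx1⟩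
  · rintro ⟨ha, hb⟩; exact ⟨⟨h0.trans ha, hb⟩, ha⟩

lemma int_g {U : ℝ} (h0 : 0 ≤ U) (h1 : U < 1) :
    ∫ x in Set.Icc (0:ℝ) 1, gaux U x = 0 := by
  rw [gaux_eq, setIntegral_indicator measurableSet_Ici, inter_eq h0,
    integral_Icc_eq_integral_Ioc, ← intervalIntegral.integral_of_le h1.le]
  have hne : (1:ℝ) - U ≠ 0 := by linarith
  have key : ∀ x ∈ Set.uIcc U 1, HasDerivAt (fun x => x - (x - U)^2 / (1 - U))
      (1 - 2 * (x - U) / (1 - U)) x := by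
    intro x _
    have h : HasDerivAt (fun x => x - (x - U)^2 / (1 - U))
        (1 - 2 * (x - U)^1 * 1 / (1 - U)) x :=
      (hasDerivAt_id x).sub ((((hasDerivAt_id x).sub_const U).pow 2).div_const (1 - U))
    convert h using 1; ring
  rw [intervalIntegral.integral_eq_sub_of_hasDerivAt key]
  · field_simp
    ring
  · apply Continuous.intervalIntegrable; continuity

lemma int_gg {U V : ℝ} (h0 : 0 ≤ U) (hUV : U ≤ V) (h1 : V < 1) :
    ∫ x in Set.Icc (0:ℝ) 1, gaux U x * gaux V x = (1 - V)^2 / (3 * (1 - U)) := by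
  rw [gmul_eq hUV, setIntegral_indicator measurableSet_Ici, inter_eq (h0.trans hUV),
    integral_Icc_eq_integral_Ioc, ← intervalIntegral.integral_of_le h1.le]
  have hU : (1:ℝ) - U ≠ 0 := by have : U < 1 := lt_of_le_of_lt hUV h1; linarith
  have hV : (1:ℝ) - V ≠ 0 := by linarith
  set F : ℝ → ℝ := fun x => x - (x - U)^2 / (1 - U) - (x - V)^2 / (1 - V)
    + (4 / ((1 - U) * (1 - V))) * (x^3 / 3 - (U + V) * x^2 / 2 + U * V * x)
  have key : ∀ x ∈ Set.uIcc V 1, HasDerivAt F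
      ((1 - 2 * (x - U) / (1 - U)) * (1 - 2 * (x - V) / (1 - V))) x := by
    intro x _
    have h := (((hasDerivAt_id x).sub ((((hasDerivAt_id x).sub_const U).pow 2).div_const (1 - U))).sub
          ((((hasDerivAt_id x).sub_const V).pow 2).div_const (1 - V))).add
        (HasDerivAt.const_mul (4 / ((1 - U) * (1 - V))) ((((hasDerivAt_pow 3 x).div_const 3).sub
          (((hasDerivAt_pow 2 x).const_mul (U + V)).div_const 2)).add ((hasDerivAt_id x).const_mul (U * V))))
    refine h.congr_deriv ?_
    push_cast
    simp only [id_eq]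
    field_simp
    ring
  rw [intervalIntegral.integral_eq_sub_of_hasDerivAt key]
  · show F 1 - F V = _
    simp only [F]
    field_simp
    ring
  · apply Continuous.intervalIntegrable; continuity

lemma cross {U V γ δ : ℝ} (h0U : 0 ≤ U) (hUV : U ≤ V) (h1 : V < 1) :
    (∫ p in Set.Icc (0:ℝ) 1 ×ˢ Set.Icc (0:ℝ) 1, fgm U γ p.1 p.2 * fgm V δ p.1 p.2)
    = 1 + γ * δ * ((1 - V)^2 / (3 * (1 - U)))^2 := by
  have h0V : 0 ≤ V := h0U.trans hUV
  have hU1 : U < 1 := lt_of_le_of_lt hUV h1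
  have hμfin : volume.restrict (Set.Icc (0:ℝ) 1) Set.univ = 1 := by
    rw [Measure.restrict_apply_univ, Real.volume_Icc]; norm_num
  haveI : IsFiniteMeasure (volume.restrict (Set.Icc (0:ℝ) 1)) := ⟨by rw [hμfin]; exact ENNReal.one_lt_top⟩
  set μ : Measure ℝ := volume.restrict (Set.Icc (0:ℝ) 1) with hμ
  have hrw : ∀ p : ℝ × ℝ, fgm U γ p.1 p.2 * fgm V δ p.1 p.2
      = 1 + γ * (gaux U p.1 * gaux U p.2) + δ * (gaux V p.1 * gaux V p.2)
        + (γ * δ) * ((fun x => gaux U x * gaux V x) p.1 * (fun x => gaux U x * gaux V x) p.2) := by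
    intro p
    simp only [fgm_eq']
    ring
  have hset : (volume : Measure (ℝ × ℝ)).restrict (Set.Icc (0:ℝ) 1 ×ˢ Set.Icc (0:ℝ) 1) = μ.prod μ := by
    rw [Measure.volume_eq_prod, Measure.prod_restrict]
  rw [show (∫ p in Set.Icc (0:ℝ) 1 ×ˢ Set.Icc (0:ℝ) 1, fgm U γ p.1 p.2 * fgm V δ p.1 p.2)
      = ∫ p, fgm U γ p.1 p.2 * fgm V δ p.1 p.2 ∂((volume : Measure (ℝ × ℝ)).restrict (Set.Icc (0:ℝ) 1 ×ˢ Set.Icc (0:ℝ) 1)) from rfl,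
    hset]
  simp_rw [hrw]
  have h1' : Integrable (fun _ : ℝ × ℝ => (1:ℝ)) (μ.prod μ) := integrable_const 1
  have hU' : Integrable (fun p : ℝ × ℝ => gaux U p.1 * gaux U p.2) (μ.prod μ) :=
    (gaux_integrable U).mul_prod (gaux_integrable U)
  have hV' : Integrable (fun p : ℝ × ℝ => gaux V p.1 * gaux V p.2) (μ.prod μ) :=
    (gaux_integrable V).mul_prod (gaux_integrable V)
  have hW' : Integrable (fun p : ℝ × ℝ => (fun x => gaux U x * gaux V x) p.1 * (fun x => gaux U x * gaux V x) p.2) (μ.prod μ) :=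
    (gmul_integrable hUV).mul_prod (gmul_integrable hUV)
  have hA : Integrable (fun p : ℝ × ℝ => 1 + γ * (gaux U p.1 * gaux U p.2)) (μ.prod μ) :=
    h1'.add (hU'.const_mul γ)
  have hB : Integrable (fun p : ℝ × ℝ =>
      1 + γ * (gaux U p.1 * gaux U p.2) + δ * (gaux V p.1 * gaux V p.2)) (μ.prod μ) :=
    hA.add (hV'.const_mul δ)
  have hC : Integrable (fun p : ℝ × ℝ =>
      γ * δ * (gaux U p.1 * gaux V p.1 * (gaux U p.2 * gaux V p.2))) (μ.prod μ) :=
    hW'.const_mul (γ * δ)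
  rw [integral_add hB hC, integral_add hA (hV'.const_mul δ), integral_add h1' (hU'.const_mul γ),
    integral_const_mul, integral_const_mul, integral_const_mul,
    integral_prod_mul, integral_prod_mul, integral_const]
  rw [show (∫ (a : ℝ × ℝ), gaux U a.1 * gaux V a.1 * (gaux U a.2 * gaux V a.2) ∂μ.prod μ)
      = (∫ x, gaux U x * gaux V x ∂μ) * ∫ x, gaux U x * gaux V x ∂μ from
    integral_prod_mul (fun x => gaux U x * gaux V x) (fun x => gaux U x * gaux V x)]
  have e1 : ∫ x, gaux U x ∂μ = 0 := int_g h0U hU1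
  have e2 : ∫ x, gaux V x ∂μ = 0 := int_g h0V h1
  have e3 : ∫ x, gaux U x * gaux V x ∂μ = (1 - V)^2 / (3 * (1 - U)) := int_gg h0U hUV h1
  have e4 : (μ.prod μ) Set.univ = 1 := by
    rw [← Set.univ_prod_univ, Measure.prod_prod, hμ, hμfin, one_mul]
  rw [e1, e2, e3, measureReal_def, e4]
  simp only [ENNReal.toReal_one, smul_eq_mul, mul_zero, zero_mul, mul_one, add_zero]
  ring

lemma final_le (j k : ℕ) (hjk : j ≤ k) (γj γk : ℝ) :
    (∫ p in Set.Icc (0 : ℝ) 1 ×ˢ Set.Icc (0 : ℝ) 1,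
        fgm (1 - 1 / 2 ^ j) γj p.1 p.2 * fgm (1 - 1 / 2 ^ k) γk p.1 p.2)
    = 1 + γj * γk * (1 / 2 ^ j : ℝ) * (1 / 2 ^ k) / (9 * 2 ^ (3 * (k - j))) := by
  have hj1 : (1:ℝ) ≤ 2 ^ j := one_le_pow₀ (by norm_num)
  have hk1 : (1:ℝ) ≤ 2 ^ k := one_le_pow₀ (by norm_num)
  have hjp : (0:ℝ) < 2 ^ j := by positivity
  have hkp : (0:ℝ) < 2 ^ k := by positivity
  have h0U : (0:ℝ) ≤ 1 - 1 / 2 ^ j := by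
    have : (1:ℝ) / 2 ^ j ≤ 1 := by rw [div_le_one hjp]; exact hj1
    linarith
  have hUV : (1:ℝ) - 1 / 2 ^ j ≤ 1 - 1 / 2 ^ k := by
    have hle : (2:ℝ) ^ j ≤ 2 ^ k := pow_le_pow_right₀ (by norm_num) hjk
    have : (1:ℝ) / 2 ^ k ≤ 1 / 2 ^ j := one_div_le_one_div_of_le hjp hle
    linarith
  have h1 : (1:ℝ) - 1 / 2 ^ k < 1 := by
    have : (0:ℝ) < 1 / 2 ^ k := by positivity
    linarith
  rw [cross h0U hUV h1]
  have hkey : (2:ℝ) ^ (3 * (k - j)) = (2 ^ k) ^ 3 / (2 ^ j) ^ 3 := by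
    rw [eq_div_iff (by positivity), ← pow_mul, ← pow_mul, ← pow_add]
    congr 1
    omega
  rw [hkey]
  field_simp
  ring

/-- cross moment of two FGM densities at `U_j = 1 − 2^{−j}`, `U_k = 1 − 2^{−k}`
under the uniform distribution on the unit square. -/
theorem fgm_cross_moment (j k : ℕ) (hj : 1 ≤ j) (hk : 1 ≤ k)
    (γj γk : ℝ) (hγj : γj ∈ Set.Icc (0 : ℝ) 1) (hγk : γk ∈ Set.Icc (0 : ℝ) 1) :
    (∫ p in Set.Icc (0 : ℝ) 1 ×ˢ Set.Icc (0 : ℝ) 1,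
        fgm (1 - 1 / 2 ^ j) γj p.1 p.2 * fgm (1 - 1 / 2 ^ k) γk p.1 p.2)
      = 1 + γj * γk * (1 - (1 - 1 / 2 ^ j)) * (1 - (1 - 1 / 2 ^ k))
          / (9 * 2 ^ (3 * ((j : ℤ) - (k : ℤ)).natAbs)) := by
  rcases le_total j k with h | h
  · rw [show ((j : ℤ) - (k : ℤ)).natAbs = k - j from by omega, final_le j k h γj γk]
    ring
  · have hswap : (∫ p in Set.Icc (0 : ℝ) 1 ×ˢ Set.Icc (0 : ℝ) 1,
        fgm (1 - 1 / 2 ^ j) γj p.1 p.2 * fgm (1 - 1 / 2 ^ k) γk p.1 p.2)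
        = ∫ p in Set.Icc (0 : ℝ) 1 ×ˢ Set.Icc (0 : ℝ) 1,
            fgm (1 - 1 / 2 ^ k) γk p.1 p.2 * fgm (1 - 1 / 2 ^ j) γj p.1 p.2 := by
      congr 1
      funext p
      ring
    rw [show ((j : ℤ) - (k : ℤ)).natAbs = j - k from by omega, hswap, final_le k j h γk γj]
    ring

end
end
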